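/- arXiv:1306.4943 — 9 statements merged into one kernel-verified Lean document; each statement's English description precedes it below -/
import Mathlib

section
/- There is no forecasting system that is high-low calibrated for every data sequence: for every forecasting system F there exists an infinite binary sequence a such that F fails to be high-low calibrated for a. -/
open Filter Topology

/-- The forecast probability on day `k` for data sequence `a`:
`F` applied to the first `k` bits of `a`. -/
noncomputable def fc (F : List Bool → ℝ) (a : ℕ → Bool) (k : ℕ) : ℝ :=
  F (List.ofFn (fun i : Fin k => a i))

/-- The discrepancy on day `k`: `a_k - π_k`. -/
noncomputable def disc (F : List Bool → ℝ) (a : ℕ → Bool) (k : ℕ) : ℝ :=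
  (if a k then 1 else 0) - fc F a k

open Classical in
/-- Mean discrepancy over the days `k < n` satisfying `P`. -/
noncomputable def avgDisc (F : List Bool → ℝ) (a : ℕ → Bool) (P : ℕ → Prop) (n : ℕ) : ℝ :=
  (∑ k ∈ (Finset.range n).filter P, disc F a k) /
    (((Finset.range n).filter P).card : ℝ)

/-- `F` is high-low calibrated for `a`: for each of the two groups of days
(forecast `≥ 1/2`, forecast `< 1/2`), either the group is finite or the mean
discrepancy over that group among the first `n` days tends to `0`. -/
def HighLowCalibrated (F : List Bool → ℝ) (a : ℕ → Bool) : Prop :=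
  ({k | 1/2 ≤ fc F a k}.Finite ∨
      Tendsto (avgDisc F a (fun k => 1/2 ≤ fc F a k)) atTop (𝓝 0)) ∧
  ({k | fc F a k < 1/2}.Finite ∨
      Tendsto (avgDisc F a (fun k => fc F a k < 1/2)) atTop (𝓝 0))

open Classical in
/-- The adversarial sequence against `F`: `a_k = 1` iff the forecast is `< 1/2`. -/
noncomputable def adv (F : List Bool → ℝ) : ℕ → Bool
  | k => if F (List.ofFn (fun i : Fin k => adv F i)) < 1/2 then true else false


open Classical in
lemma adv_spec (F : List Bool → ℝ) (k : ℕ) :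
    adv F k = true ↔ fc F (adv F) k < 1/2 := by
  conv_lhs => rw [adv]
  have h : fc F (adv F) k = F (List.ofFn (fun i : Fin k => adv F i)) := rfl
  rw [h]
  split_ifs with h'
  · exact iff_of_true rfl h'
  · exact iff_of_false (by simp) h'

lemma not_tendsto_of_big (g : ℕ → ℝ)
    (h : ∀ᶠ n in Filter.atTop, (1:ℝ)/2 ≤ |g n|) :
    ¬ Filter.Tendsto g Filter.atTop (𝓝 0) := by
  intro ht
  have h2 : ∀ᶠ n in Filter.atTop, dist (g n) 0 < 1/2 :=
    ht.eventually (Metric.ball_mem_nhds 0 (by norm_num))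
  obtain ⟨n, h1, h2⟩ := (h.and h2).exists
  rw [Real.dist_eq, sub_zero] at h2
  linarith

lemma half_le_avg (s : Finset ℕ) (f : ℕ → ℝ) (hs : s.Nonempty)
    (h : ∀ k ∈ s, (1:ℝ)/2 ≤ f k) : 1/2 ≤ (∑ k ∈ s, f k) / s.card := by
  have hc : (0:ℝ) < s.card := by
    exact_mod_cast Finset.card_pos.mpr hs
  rw [le_div_iff₀ hc]
  calc (1:ℝ)/2 * s.card = s.card • ((1:ℝ)/2) := by
        rw [nsmul_eq_mul]; ring
    _ ≤ ∑ k ∈ s, f k := Finset.card_nsmul_le_sum s f _ h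

theorem no_universally_calibrated_forecaster
    (F : List Bool → ℝ) (hF : ∀ w, F w ∈ Set.Icc (0 : ℝ) 1) :
    ∃ a : ℕ → Bool, ¬ HighLowCalibrated F a := by

  refine ⟨adv F, ?_⟩
  set a := adv F with ha
  rintro ⟨h1, h2⟩
  by_cases hS : {k | fc F a k < 1/2}.Infinite
  · -- low group infinite; on it a k = true, disc ≥ 1/2
    rcases h2 with hfin | ht
    · exact hS hfin
    · refine not_tendsto_of_big _ ?_ ht
      obtain ⟨m, hm⟩ := hS.nonempty
      rw [Filter.eventually_atTop]
      refine ⟨m + 1, fun n hn => ?_⟩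
      classical
      set s := (Finset.range n).filter (fun k => fc F a k < 1/2) with hs
      have hmem : m ∈ s := by
        simp only [hs, Finset.mem_filter, Finset.mem_range]
        exact ⟨lt_of_lt_of_le (Nat.lt_succ_self m) hn, hm⟩
      have hne : s.Nonempty := ⟨m, hmem⟩
      have hb : ∀ k ∈ s, (1:ℝ)/2 ≤ disc F a k := by
        intro k hk
        have hk' : fc F a k < 1/2 := (Finset.mem_filter.mp hk).2
        have hak : a k = true := (adv_spec F k).mpr hk'
        have hd : disc F a k = 1 - fc F a k := by simp [disc, hak]
        rw [hd]; linarith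
      have := half_le_avg s _ hne hb
      have heq : avgDisc F a (fun k => fc F a k < 1/2) n
          = (∑ k ∈ s, disc F a k) / s.card := by
        simp only [avgDisc, hs]
      rw [heq]
      exact le_trans this (le_abs_self _)
  · -- high group infinite
    have hS' : {k | 1/2 ≤ fc F a k}.Infinite := by
      rw [Set.not_infinite] at hS
      have : {k | 1/2 ≤ fc F a k} = {k | fc F a k < 1/2}ᶜ := by
        ext k; simp [not_lt]
      rw [this]
      exact hS.infinite_compl
    rcases h1 with hfin | ht
    · exact hS' hfin
    · refine not_tendsto_of_big _ ?_ ht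
      obtain ⟨m, hm⟩ := hS'.nonempty
      rw [Filter.eventually_atTop]
      refine ⟨m + 1, fun n hn => ?_⟩
      classical
      set s := (Finset.range n).filter (fun k => (1:ℝ)/2 ≤ fc F a k) with hs
      have hmem : m ∈ s := by
        simp only [hs, Finset.mem_filter, Finset.mem_range]
        exact ⟨lt_of_lt_of_le (Nat.lt_succ_self m) hn, hm⟩
      have hne : s.Nonempty := ⟨m, hmem⟩
      have hb : ∀ k ∈ s, (1:ℝ)/2 ≤ -disc F a k := by
        intro k hk
        have hk' : (1:ℝ)/2 ≤ fc F a k := (Finset.mem_filter.mp hk).2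
        have hak : a k = false := by
          cases h : a k
          · rfl
          · exact absurd ((adv_spec F k).mp h) (not_lt.mpr hk')
        have hd : disc F a k = -fc F a k := by simp [disc, hak]
        rw [hd]; linarith
      have hav := half_le_avg s _ hne hb
      have hsum : (∑ k ∈ s, -disc F a k) = -∑ k ∈ s, disc F a k := by
        rw [Finset.sum_neg_distrib]
      have heq : avgDisc F a (fun k => 1/2 ≤ fc F a k) n
          = (∑ k ∈ s, disc F a k) / s.card := by
        simp only [avgDisc, hs]
      rw [hsum, neg_div] at hav
      rw [heq]
      exact le_trans hav (neg_le_abs _)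
end

section
/- For the adversarial sequence a against a forecasting system F (defined by a_k = 1 iff π_k < 1/2), either the set of days with π_k < 1/2 is infinite and the mean discrepancy over those days among the first n days is at least 1/2 whenever at least one such day exists, or the set of days with π_k ≥ 1/2 is infinite and the corresponding mean discrepancy is at most −1/2; in either case F is not high-low calibrated for a. -/
open Filter Topology

open Classical in
theorem adversarial_sequence_mean_discrepancy
    (F : List Bool → ℝ) (hF : ∀ w, F w ∈ Set.Icc (0 : ℝ) 1) :
    (({k | fc F (adv F) k < 1/2}.Infinite ∧
        ∀ n, ((Finset.range n).filter (fun k => fc F (adv F) k < 1/2)).Nonempty →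
          1/2 ≤ avgDisc F (adv F) (fun k => fc F (adv F) k < 1/2) n) ∨
      ({k | 1/2 ≤ fc F (adv F) k}.Infinite ∧
        ∀ n, ((Finset.range n).filter (fun k => 1/2 ≤ fc F (adv F) k)).Nonempty →
          avgDisc F (adv F) (fun k => 1/2 ≤ fc F (adv F) k) n ≤ -(1/2))) ∧
    ¬ HighLowCalibrated F (adv F) := by

  classical
  have hadv : ∀ k, adv F k = true ↔ fc F (adv F) k < 1/2 := by
    intro k
    rw [adv]
    simp only [fc]
    split_ifs with h
    · exact iff_of_true rfl h
    · exact iff_of_false (by simp) h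
  have hdisc_low : ∀ k, fc F (adv F) k < 1/2 → 1/2 ≤ disc F (adv F) k := by
    intro k hk
    have ht : adv F k = true := (hadv k).mpr hk
    have hd : disc F (adv F) k = 1 - fc F (adv F) k := by simp [disc, ht]
    linarith
  have hdisc_high : ∀ k, 1/2 ≤ fc F (adv F) k → disc F (adv F) k ≤ -(1/2) := by
    intro k hk
    have ht : adv F k = false := by
      by_contra h
      have h' : adv F k = true := by
        cases hdef : adv F k
        · exact absurd hdef h
        · rfl
      have := (hadv k).mp h'
      linarith
    have hd : disc F (adv F) k = -fc F (adv F) k := by simp [disc, ht]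
    linarith
  have hlowavg : ∀ n, ((Finset.range n).filter (fun k => fc F (adv F) k < 1/2)).Nonempty →
      1/2 ≤ avgDisc F (adv F) (fun k => fc F (adv F) k < 1/2) n := by
    intro n hn
    unfold avgDisc
    set s := (Finset.range n).filter (fun k => fc F (adv F) k < 1/2) with hs
    have hcard : (0:ℝ) < (s.card : ℝ) := by exact_mod_cast Finset.card_pos.mpr hn
    rw [le_div_iff₀ hcard]
    have hsum : ∑ k ∈ s, (1/2 : ℝ) ≤ ∑ k ∈ s, disc F (adv F) k :=
      Finset.sum_le_sum fun k hk => hdisc_low k (Finset.mem_filter.mp hk).2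
    rw [Finset.sum_const, nsmul_eq_mul] at hsum
    linarith
  have hhighavg : ∀ n, ((Finset.range n).filter (fun k => 1/2 ≤ fc F (adv F) k)).Nonempty →
      avgDisc F (adv F) (fun k => 1/2 ≤ fc F (adv F) k) n ≤ -(1/2) := by
    intro n hn
    unfold avgDisc
    set s := (Finset.range n).filter (fun k => 1/2 ≤ fc F (adv F) k) with hs
    have hcard : (0:ℝ) < (s.card : ℝ) := by exact_mod_cast Finset.card_pos.mpr hn
    rw [div_le_iff₀ hcard]
    have hsum : ∑ k ∈ s, disc F (adv F) k ≤ ∑ k ∈ s, (-(1/2) : ℝ) :=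
      Finset.sum_le_sum fun k hk => hdisc_high k (Finset.mem_filter.mp hk).2
    rw [Finset.sum_const, nsmul_eq_mul] at hsum
    linarith
  have hinf : {k | fc F (adv F) k < 1/2}.Infinite ∨ {k | 1/2 ≤ fc F (adv F) k}.Infinite := by
    by_contra h
    push_neg at h
    have hfin := Set.Finite.union h.1 h.2
    have huniv : {k | fc F (adv F) k < 1/2} ∪ {k | 1/2 ≤ fc F (adv F) k} = Set.univ := by
      ext k
      simp only [Set.mem_union, Set.mem_setOf_eq, Set.mem_univ, iff_true]
      exact lt_or_ge _ _
    rw [huniv] at hfin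
    exact Set.infinite_univ hfin
  constructor
  · rcases hinf with h | h
    · exact Or.inl ⟨h, hlowavg⟩
    · exact Or.inr ⟨h, hhighavg⟩
  · rintro ⟨hcal1, hcal2⟩
    rcases hinf with h | h
    · rcases hcal2 with hfin | htend
      · exact h hfin
      obtain ⟨k, hk⟩ := h.nonempty
      have hev : ∀ᶠ n in atTop,
          1/2 ≤ avgDisc F (adv F) (fun k => fc F (adv F) k < 1/2) n := by
        filter_upwards [eventually_ge_atTop (k+1)] with n hn
        exact hlowavg n ⟨k, Finset.mem_filter.mpr
          ⟨Finset.mem_range.mpr (Nat.lt_of_lt_of_le (Nat.lt_succ_self k) hn), hk⟩⟩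
      have hlt := htend.eventually (gt_mem_nhds (by norm_num : (0:ℝ) < 1/2))
      obtain ⟨n, h1, h2⟩ := (hev.and hlt).exists
      linarith
    · rcases hcal1 with hfin | htend
      · exact h hfin
      obtain ⟨k, hk⟩ := h.nonempty
      have hev : ∀ᶠ n in atTop,
          avgDisc F (adv F) (fun k => 1/2 ≤ fc F (adv F) k) n ≤ -(1/2) := by
        filter_upwards [eventually_ge_atTop (k+1)] with n hn
        exact hhighavg n ⟨k, Finset.mem_filter.mpr
          ⟨Finset.mem_range.mpr (Nat.lt_of_lt_of_le (Nat.lt_succ_self k) hn), hk⟩⟩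
      have hlt := htend.eventually (lt_mem_nhds (by norm_num : (-(1/2):ℝ) < 0))
      obtain ⟨n, h1, h2⟩ := (hev.and hlt).exists
      linarith
end

section
/- For every forecasting system F, the set of infinite binary sequences for which F is high-low calibrated is a meagre subset of Cantor space (with the product topology). -/
open Filter Topology

/-!
For a calibrated sequence there is an `N` such that at every stage `n ≥ N` each of the two groups
of days either has at most `N` members so far or has mean discrepancy within `1/4` of zero. For
fixed `N` these sequences form a closed set, since each stage only looks at a finite prefix. The
set has empty interior: any prefix of length `m` can be continued adversarially (`a_k = 1` iff
`π_k < 1/2`), after which every high day has `d_k ≤ -1/2` and every low day has `d_k > 1/2`; the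
first `m` days contribute a fixed amount, so the mean over the larger group eventually leaves
`[-1/4, 1/4]`.
-/

open Finset

section Prefix

variable {α : Type*} [TopologicalSpace α] [DiscreteTopology α]

lemma isClosed_of_forall_prefix_eq {S : Set (ℕ → α)} (n : ℕ)
    (hS : ∀ a b, (∀ i < n, a i = b i) → a ∈ S → b ∈ S) : IsClosed S := by
  rw [← isOpen_compl_iff, isOpen_iff_forall_mem_open]
  exact fun a ha => ⟨PiNat.cylinder a n,
    fun b hb hbS => ha (hS b a (PiNat.mem_cylinder_iff.1 hb) hbS),
    PiNat.isOpen_cylinder _ a n, PiNat.self_mem_cylinder a n⟩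

lemma isNowhereDense_of_forall_cylinder {S : Set (ℕ → α)} (hS : IsClosed S)
    (h : ∀ x n, ∃ y ∈ PiNat.cylinder x n, y ∉ S) : IsNowhereDense S := by
  rw [hS.isNowhereDense_iff, interior_eq_empty_iff_dense_compl,
    (PiNat.isTopologicalBasis_cylinders _).dense_iff]
  rintro _ ⟨x, n, rfl⟩ -
  exact h x n

end Prefix

lemma quarter_lt_abs_average {A : Finset ℕ} {f : ℕ → ℝ} {m : ℕ}
    (hf : ∀ k ∈ A, m ≤ k → 1/2 ≤ f k) (hA : 4 * ∑ k ∈ range m, |f k| + 2 * m < #A) :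
    1/4 < |(∑ k ∈ A, f k) / #A| := by
  have hpos : (0 : ℝ) < #A := lt_of_le_of_lt (by positivity) hA
  have hearly_card : (#(A.filter (· < m)) : ℝ) ≤ m := by
    exact_mod_cast (card_le_card fun k hk => mem_range.2 (mem_filter.1 hk).2).trans
      (card_range m).le
  have hearly : -∑ k ∈ range m, |f k| ≤ ∑ k ∈ A.filter (· < m), f k :=
    calc -∑ k ∈ range m, |f k|
        ≤ -∑ k ∈ A.filter (· < m), |f k| :=
          neg_le_neg <| sum_le_sum_of_subset_of_nonneg
            (fun k hk => mem_range.2 (mem_filter.1 hk).2) fun _ _ _ => abs_nonneg _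
      _ ≤ ∑ k ∈ A.filter (· < m), f k := by
          rw [← sum_neg_distrib]
          exact sum_le_sum fun k _ => neg_abs_le (f k)
  have hlate : (#(A.filter fun k => ¬k < m) : ℝ) * (1/2) ≤
      ∑ k ∈ A.filter (fun k => ¬k < m), f k := by
    rw [← nsmul_eq_mul]
    exact card_nsmul_le_sum _ _ _ fun k hk =>
      hf k (mem_filter.1 hk).1 (not_lt.1 (mem_filter.1 hk).2)
  have hcard : (#(A.filter (· < m)) : ℝ) + #(A.filter fun k => ¬k < m) = #A := by
    exact_mod_cast card_filter_add_card_filter_not _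
  rw [← sum_filter_add_sum_filter_not A (· < m), lt_abs, lt_div_iff₀ hpos]
  left
  linarith

open Classical in
lemma lt_card_filter_or_lt_card_filter {P Q : ℕ → Prop} (hPQ : ∀ k, P k ∨ Q k) {K n : ℕ}
    (hn : 2 * K < n) : K < #((range n).filter P) ∨ K < #((range n).filter Q) := by
  have hcover : n ≤ #((range n).filter P) + #((range n).filter Q) :=
    calc n = #((range n).filter fun k => P k ∨ Q k) := by
          rw [filter_true_of_mem fun k _ => hPQ k, card_range]
      _ ≤ _ := by
          rw [filter_or]
          exact card_union_le _ _
  omega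

variable {F : List Bool → ℝ}

lemma fc_congr {a b : ℕ → Bool} {k : ℕ} (h : ∀ i < k, a i = b i) : fc F a k = fc F b k := by
  unfold fc
  congr 2
  exact funext fun i => h i i.isLt

lemma disc_congr {a b : ℕ → Bool} {k : ℕ} (h : ∀ i ≤ k, a i = b i) :
    disc F a k = disc F b k := by
  rw [disc, disc, fc_congr fun i hi => h i hi.le, h k le_rfl]

open Classical in
def NearlyCalibratedOn (F : List Bool → ℝ) (a : ℕ → Bool) (P : ℕ → Prop) (N n : ℕ) :
    Prop :=
  #((range n).filter P) ≤ N ∨ |avgDisc F a P n| ≤ 1/4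

open Classical in
lemma nearlyCalibratedOn_congr {a b : ℕ → Bool} {P Q : ℕ → Prop} {N n : ℕ}
    (hab : ∀ i < n, a i = b i) (hPQ : ∀ k < n, P k ↔ Q k) :
    NearlyCalibratedOn F a P N n ↔ NearlyCalibratedOn F b Q N n := by
  have hdays : (range n).filter P = (range n).filter Q :=
    filter_congr fun k hk => hPQ k (mem_range.1 hk)
  have hsum : ∑ k ∈ (range n).filter Q, disc F a k = ∑ k ∈ (range n).filter Q, disc F b k :=
    sum_congr rfl fun k hk =>
      disc_congr fun i hi => hab i (hi.trans_lt (mem_range.1 (mem_filter.1 hk).1))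
  simp only [NearlyCalibratedOn, avgDisc, hdays, hsum]

open Classical in
lemma eventually_nearlyCalibratedOn {a : ℕ → Bool} {P : ℕ → Prop}
    (h : {k | P k}.Finite ∨ Tendsto (avgDisc F a P) atTop (𝓝 0)) :
    ∀ᶠ N in atTop, ∀ n ≥ N, NearlyCalibratedOn F a P N n := by
  rcases h with hfin | hlim
  · refine eventually_atTop.2 ⟨hfin.toFinset.card, fun N hN n _ => Or.inl ?_⟩
    refine (card_le_card fun k hk => ?_).trans hN
    exact hfin.mem_toFinset.2 (mem_filter.1 hk).2
  · have habs : Tendsto (fun n => |avgDisc F a P n|) atTop (𝓝 0) := by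
      simpa using hlim.abs
    exact (eventually_forall_ge_atTop.2 (habs.eventually (ge_mem_nhds (by norm_num)))).mono
      fun N hN n hn => Or.inr (hN n hn)

def TameAt (F : List Bool → ℝ) (N n : ℕ) (a : ℕ → Bool) : Prop :=
  NearlyCalibratedOn F a (fun k => 1/2 ≤ fc F a k) N n ∧
    NearlyCalibratedOn F a (fun k => fc F a k < 1/2) N n

def tameSet (F : List Bool → ℝ) (N : ℕ) : Set (ℕ → Bool) :=
  {a | ∀ n ≥ N, TameAt F N n a}

lemma setOf_highLowCalibrated_subset_iUnion_tameSet :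
    {a | HighLowCalibrated F a} ⊆ ⋃ N, tameSet F N := by
  rintro a ⟨hhigh, hlow⟩
  obtain ⟨N, hN⟩ :=
    ((eventually_nearlyCalibratedOn hhigh).and (eventually_nearlyCalibratedOn hlow)).exists
  exact Set.mem_iUnion.2 ⟨N, fun n hn => ⟨hN.1 n hn, hN.2 n hn⟩⟩

lemma isClosed_tameSet (N : ℕ) : IsClosed (tameSet F N) := by
  simp only [tameSet, Set.ofPred_forall]
  refine isClosed_iInter fun n => isClosed_iInter fun _ => isClosed_of_forall_prefix_eq n ?_
  intro a b hab ha
  have hfc : ∀ k < n, fc F a k = fc F b k := fun k hk =>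
    fc_congr fun i hi => hab i (hi.trans hk)
  exact ⟨(nearlyCalibratedOn_congr hab fun k hk => by rw [hfc k hk]).1 ha.1,
    (nearlyCalibratedOn_congr hab fun k hk => by rw [hfc k hk]).1 ha.2⟩

noncomputable def advExt (F : List Bool → ℝ) (x : ℕ → Bool) (m : ℕ) : ℕ → Bool
  | k => if k < m then x k else decide (F (List.ofFn fun i : Fin k => advExt F x m i) < 1/2)

lemma advExt_of_lt {x : ℕ → Bool} {m k : ℕ} (hk : k < m) : advExt F x m k = x k := by
  rw [advExt, if_pos hk]

lemma advExt_of_le {x : ℕ → Bool} {m k : ℕ} (hk : m ≤ k) :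
    advExt F x m k = decide (fc F (advExt F x m) k < 1/2) := by
  rw [advExt, if_neg hk.not_gt, fc]

lemma disc_advExt_le_of_le_fc {x : ℕ → Bool} {m k : ℕ} (hk : m ≤ k)
    (h : 1/2 ≤ fc F (advExt F x m) k) : disc F (advExt F x m) k ≤ -(1/2) := by
  rw [disc, advExt_of_le hk, decide_eq_false h.not_gt]
  norm_num
  linarith

lemma lt_disc_advExt_of_fc_lt {x : ℕ → Bool} {m k : ℕ} (hk : m ≤ k)
    (h : fc F (advExt F x m) k < 1/2) : 1/2 < disc F (advExt F x m) k := by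
  rw [disc, advExt_of_le hk, decide_eq_true h]
  norm_num
  linarith

open Classical in
lemma not_nearlyCalibratedOn {a : ℕ → Bool} {P : ℕ → Prop} {N n m : ℕ} {σ : ℝ}
    (hσ : |σ| = 1) (hdisc : ∀ k < n, P k → m ≤ k → 1/2 ≤ σ * disc F a k)
    (hN : N < #((range n).filter P))
    (hm : 4 * ∑ k ∈ range m, |disc F a k| + 2 * m < #((range n).filter P)) :
    ¬NearlyCalibratedOn F a P N n := by
  have hfar := quarter_lt_abs_average (f := fun k => σ * disc F a k)
    (fun k hk hmk => hdisc k (mem_range.1 (mem_filter.1 hk).1) (mem_filter.1 hk).2 hmk)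
    (by simpa only [abs_mul, hσ, one_mul] using hm)
  rw [← mul_sum, mul_div_assoc, abs_mul, hσ, one_mul] at hfar
  rintro (h | h)
  · omega
  · exact not_le.2 hfar h

lemma advExt_notMem_tameSet (x : ℕ → Bool) (m N : ℕ) : advExt F x m ∉ tameSet F N := by
  set b := advExt F x m
  set M := ∑ k ∈ range m, |disc F b k|
  set K := N + ⌈4 * M⌉₊ + 2 * m
  have hK : ∀ c : ℕ, K < c → N < c ∧ 4 * M + 2 * m < c := fun c hc => by
    refine ⟨by omega, ?_⟩
    have : (K : ℝ) + 1 ≤ c := by exact_mod_cast hc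
    have := Nat.le_ceil (4 * M)
    push_cast [K] at *
    linarith
  intro hb
  obtain ⟨hhigh, hlow⟩ := hb (2 * K + 1) (by omega)
  rcases lt_card_filter_or_lt_card_filter (fun k => le_or_gt (1/2) (fc F b k))
    (Nat.lt_succ_self (2 * K)) with h | h
  · exact not_nearlyCalibratedOn (σ := -1) (by simp)
      (fun k _ hk hmk => by linarith [disc_advExt_le_of_le_fc hmk hk]) (hK _ h).1 (hK _ h).2
      hhigh
  · exact not_nearlyCalibratedOn (σ := 1) (by simp)
      (fun k _ hk hmk => by linarith [lt_disc_advExt_of_fc_lt hmk hk]) (hK _ h).1 (hK _ h).2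
      hlow

lemma isNowhereDense_tameSet (N : ℕ) : IsNowhereDense (tameSet F N) :=
  isNowhereDense_of_forall_cylinder (isClosed_tameSet N) fun x m =>
    ⟨advExt F x m, PiNat.mem_cylinder_iff.2 fun _ => advExt_of_lt, advExt_notMem_tameSet x m N⟩

theorem calibration_set_is_meagre_general
    (F : List Bool → ℝ) :
    IsMeagre {a : ℕ → Bool | HighLowCalibrated F a} :=
  (isMeagre_iUnion fun N => (isNowhereDense_tameSet N).isMeagre).mono
    setOf_highLowCalibrated_subset_iUnion_tameSet

theorem calibration_set_is_meagre
    (F : List Bool → ℝ) (hF : ∀ w, F w ∈ Set.Icc (0 : ℝ) 1) :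
    IsMeagre {a : ℕ → Bool | HighLowCalibrated F a} :=
  calibration_set_is_meagre_general F
end

section
/- For every forecasting system F, the set of infinite binary sequences for which F fails to be high-low calibrated is a residual (comeagre) subset of Cantor space. -/
open Filter Topology

/-! The adversary that outputs `1` exactly when the forecast is below `1/2` makes every discrepancy
at least `1/2` in size, positive on low-forecast days and negative on high-forecast days, while on
any day the discrepancy is at least `-1/2` in the direction of the day's group. So if a prefix of
length `L` is followed by adversarial play, the mean discrepancy over any group with at least
`4 L` days is at least `1/4` in size. Hence, for every `n`, the sequences whose mean discrepancy on
one group reaches `1/4` in size at a time when that group already has `n` days form a dense set,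
open because membership is witnessed by a finite prefix. These sets shrink as `n` grows, so on
their residual intersection a single group is biased in this way for every `n`, and calibration
fails on it. -/

open Filter Topology Finset PiNat

lemma quarter_le_sum_div_card {s : Finset ℕ} {x : ℕ → ℝ} {L : ℕ} (hs : s.Nonempty)
    (hL : 4 * L ≤ #s) (hbdd : ∀ k ∈ s, -(1/2) ≤ x k) (hlate : ∀ k ∈ s, L ≤ k → 1/2 ≤ x k) :
    1/4 ≤ (∑ k ∈ s, x k) / #s := by
  set early := s.filter (· < L)
  set late := s.filter (fun k => ¬ k < L)
  have hearly_card : (#early : ℝ) ≤ L := by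
    have : early ⊆ range L := fun k hk => mem_range.2 (mem_filter.1 hk).2
    exact_mod_cast (card_le_card this).trans_eq (card_range L)
  have hearly_sum : #early • (-(1/2) : ℝ) ≤ ∑ k ∈ early, x k :=
    card_nsmul_le_sum _ _ _ fun k hk => hbdd k (mem_filter.1 hk).1
  have hlate_sum : #late • (1/2 : ℝ) ≤ ∑ k ∈ late, x k :=
    card_nsmul_le_sum _ _ _ fun k hk => hlate k (mem_filter.1 hk).1 (not_lt.1 (mem_filter.1 hk).2)
  have hcard : (#early : ℝ) + #late = #s := by
    exact_mod_cast card_filter_add_card_filter_not (s := s) (· < L)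
  have hL' : 4 * (L : ℝ) ≤ #s := by exact_mod_cast hL
  rw [nsmul_eq_mul] at hearly_sum hlate_sum
  rw [le_div_iff₀ (by exact_mod_cast hs.card_pos), ← sum_filter_add_sum_filter_not s (· < L)]
  linarith

section Discrepancy

variable {F : List Bool → ℝ} {a b : ℕ → Bool} {k m : ℕ}

lemma fc_eq_of_mem_cylinder (hb : b ∈ cylinder a k) : fc F b k = fc F a k :=
  congrArg (fun w : Fin k → Bool => F (List.ofFn w)) (funext fun i => hb i i.2)

lemma disc_eq_of_mem_cylinder (hk : k < m) (hb : b ∈ cylinder a m) :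
    disc F b k = disc F a k := by
  rw [disc, disc, hb k hk, fc_eq_of_mem_cylinder (cylinder_anti a hk.le hb)]

lemma avgDisc_eq_of_mem_cylinder {P Q : ℕ → Prop} (hPQ : ∀ k < m, P k ↔ Q k)
    (hb : b ∈ cylinder a m) : avgDisc F b P m = avgDisc F a Q m := by
  classical
  have hfilter : (range m).filter P = (range m).filter Q :=
    filter_congr fun k hk => hPQ k (mem_range.1 hk)
  rw [avgDisc, avgDisc, hfilter]
  exact congrArg (· / _) <| sum_congr rfl fun k hk =>
    disc_eq_of_mem_cylinder (mem_range.1 (mem_filter.1 hk).1) hb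

lemma disc_le_half_of_half_le_fc (h : 1/2 ≤ fc F a k) : disc F a k ≤ 1/2 := by
  unfold disc
  split <;> linarith

lemma neg_half_le_disc_of_fc_lt_half (h : fc F a k < 1/2) : -(1/2) ≤ disc F a k := by
  unfold disc
  split <;> linarith

end Discrepancy

open Classical in
def BiasedAfter (F : List Bool → ℝ) (P : (ℕ → Bool) → ℕ → Prop) (n : ℕ) : Set (ℕ → Bool) :=
  {a | ∃ m, n ≤ #((range m).filter (P a)) ∧ 1/4 ≤ |avgDisc F a (P a) m|}

section BiasedAfter

variable {F : List Bool → ℝ} {P : (ℕ → Bool) → ℕ → Prop}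

lemma biasedAfter_antitone : Antitone (BiasedAfter F P) :=
  fun _ _ hnm _ ⟨m, hcard, hbias⟩ => ⟨m, hnm.trans hcard, hbias⟩

lemma isOpen_biasedAfter (hP : ∀ a b k, b ∈ cylinder a k → (P b k ↔ P a k)) (n : ℕ) :
    IsOpen (BiasedAfter F P n) := by
  classical
  refine isOpen_iff_forall_mem_open.2 fun a ⟨m, hcard, hbias⟩ =>
    ⟨cylinder a m, fun b hb => ⟨m, ?_, ?_⟩, isOpen_cylinder _ a m, self_mem_cylinder a m⟩
  · have hPab : ∀ k < m, P b k ↔ P a k := fun k hk => hP a b k (cylinder_anti a hk.le hb)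
    rwa [filter_congr fun k hk => hPab k (mem_range.1 hk)]
  · rwa [avgDisc_eq_of_mem_cylinder (fun k hk => hP a b k (cylinder_anti a hk.le hb)) hb]

lemma not_finite_or_tendsto_of_mem_iInter_biasedAfter {a : ℕ → Bool}
    (ha : a ∈ ⋂ n, BiasedAfter F P n) :
    ¬ ({k | P a k}.Finite ∨ Tendsto (avgDisc F a (P a)) atTop (𝓝 0)) := by
  classical
  rw [Set.mem_iInter] at ha
  rintro (hfin | htend)
  · obtain ⟨m, hcard, -⟩ := ha (#hfin.toFinset + 1)
    have : #((range m).filter (P a)) ≤ #hfin.toFinset :=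
      card_le_card fun k hk => hfin.mem_toFinset.2 (mem_filter.1 hk).2
    omega
  · obtain ⟨M, hM⟩ := Metric.tendsto_atTop.1 htend (1/4) (by norm_num)
    obtain ⟨m, hcard, hbias⟩ := ha M
    have hdist := hM m (hcard.trans ((card_filter_le _ _).trans (card_range m).le))
    rw [Real.dist_eq, sub_zero] at hdist
    linarith

/-- `σ = ±1` is the sign of the discrepancies on the `P`-days of `b`. -/
lemma mem_biasedAfter_of_infinite {b : ℕ → Bool} {L : ℕ} (σ : ℝ) (hσ : |σ| = 1)
    (hinf : {k | P b k}.Infinite) (hbdd : ∀ k, P b k → -(1/2) ≤ σ * disc F b k)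
    (hlate : ∀ k, L ≤ k → P b k → 1/2 ≤ σ * disc F b k) (n : ℕ) :
    b ∈ BiasedAfter F P n := by
  classical
  set N := max n (max (4 * L) 1)
  have hcount : #((range (Nat.nth (P b) N)).filter (P b)) = N := by
    rw [← Nat.count_eq_card_filter_range, Nat.count_nth_of_infinite hinf]
  refine ⟨Nat.nth (P b) N, hcount.symm ▸ le_max_left _ _, ?_⟩
  have hpos : ((range (Nat.nth (P b) N)).filter (P b)).Nonempty := by
    rw [← card_pos, hcount]
    omega
  have key := quarter_le_sum_div_card (x := fun k => σ * disc F b k) hpos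
    (by rw [hcount]; omega) (fun k hk => hbdd k (mem_filter.1 hk).2)
    (fun k hk hLk => hlate k hLk (mem_filter.1 hk).2)
  rw [← mul_sum, mul_div_assoc] at key
  calc 1/4 ≤ σ * avgDisc F b (P b) _ := key
    _ ≤ |σ * avgDisc F b (P b) _| := le_abs_self _
    _ = |avgDisc F b (P b) _| := by rw [abs_mul, hσ, one_mul]

end BiasedAfter

open Classical in
noncomputable def advExtend (F : List Bool → ℝ) (a : ℕ → Bool) (L : ℕ) : ℕ → Bool
  | k => if k < L then a k else decide (F (List.ofFn fun i : Fin k => advExtend F a L i) < 1/2)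

section advExtend

variable {F : List Bool → ℝ} {a : ℕ → Bool} {L k : ℕ}

lemma advExtend_mem_cylinder : advExtend F a L ∈ cylinder a L := fun k hk => by
  rw [advExtend, if_pos hk]

lemma advExtend_of_le (h : L ≤ k) :
    advExtend F a L k = decide (fc F (advExtend F a L) k < 1/2) := by
  rw [advExtend, if_neg (not_lt.2 h), fc]

lemma disc_advExtend_le_neg_half (h : L ≤ k) (hk : 1/2 ≤ fc F (advExtend F a L) k) :
    disc F (advExtend F a L) k ≤ -(1/2) := by
  rw [disc, advExtend_of_le h, decide_eq_false (not_lt.2 hk)]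
  simp only [Bool.false_eq_true, if_false]
  linarith

lemma half_le_disc_advExtend (h : L ≤ k) (hk : fc F (advExtend F a L) k < 1/2) :
    1/2 ≤ disc F (advExtend F a L) k := by
  rw [disc, advExtend_of_le h, decide_eq_true hk]
  simp only [if_true]
  linarith

end advExtend

lemma dense_biasedAfter_union (F : List Bool → ℝ) (n : ℕ) :
    Dense (BiasedAfter F (fun a k => 1/2 ≤ fc F a k) n ∪
      BiasedAfter F (fun a k => fc F a k < 1/2) n) := by
  refine (isTopologicalBasis_cylinders fun _ => Bool).dense_iff.2 ?_
  rintro _ ⟨a, L, rfl⟩ -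
  set b := advExtend F a L
  refine ⟨b, advExtend_mem_cylinder, ?_⟩
  have hunion : {k | 1/2 ≤ fc F b k} ∪ {k | fc F b k < 1/2} = Set.univ :=
    Set.eq_univ_of_forall fun k => le_or_gt (1/2) (fc F b k)
  rcases Set.infinite_union.1 (hunion ▸ Set.infinite_univ) with hinf | hinf
  · refine Or.inl (mem_biasedAfter_of_infinite (L := L) (-1) (by simp) hinf (fun k hk => ?_)
      (fun k hLk hk => ?_) n)
    · linarith [disc_le_half_of_half_le_fc hk]
    · linarith [disc_advExtend_le_neg_half hLk hk]
  · refine Or.inr (mem_biasedAfter_of_infinite (L := L) 1 (by simp) hinf (fun k hk => ?_)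
      (fun k hLk hk => ?_) n)
    · linarith [neg_half_le_disc_of_fc_lt_half hk]
    · linarith [half_le_disc_advExtend hLk hk]

theorem noncalibration_set_is_residual_general
    (F : List Bool → ℝ) :
    {a : ℕ → Bool | ¬ HighLowCalibrated F a} ∈ residual (ℕ → Bool) := by
  have hopen : ∀ n, IsOpen (BiasedAfter F (fun a k => 1/2 ≤ fc F a k) n ∪
      BiasedAfter F (fun a k => fc F a k < 1/2) n) := fun n =>
    (isOpen_biasedAfter (fun _ _ _ hb => by rw [fc_eq_of_mem_cylinder hb]) n).union
      (isOpen_biasedAfter (fun _ _ _ hb => by rw [fc_eq_of_mem_cylinder hb]) n)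
  have hres := countable_iInter_mem.2 fun n =>
    residual_of_dense_open (hopen n) (dense_biasedAfter_union F n)
  refine mem_of_superset hres fun a ha hcal => ?_
  rw [Set.iInter_union_of_antitone biasedAfter_antitone biasedAfter_antitone] at ha
  rcases ha with ha | ha
  · exact not_finite_or_tendsto_of_mem_iInter_biasedAfter ha hcal.1
  · exact not_finite_or_tendsto_of_mem_iInter_biasedAfter ha hcal.2

theorem noncalibration_set_is_residual
    (F : List Bool → ℝ) (hF : ∀ w, F w ∈ Set.Icc (0 : ℝ) 1) :
    {a : ℕ → Bool | ¬ HighLowCalibrated F a} ∈ residual (ℕ → Bool) :=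
  noncalibration_set_is_residual_general F
end

section
/- For every forecasting system F, the set of infinite binary sequences for which F fails to be high-low calibrated is uncountable. -/
open Filter Topology

-- auxiliary
noncomputable def aseq (F : List Bool → ℝ) (c : ℕ → Bool) : ℕ → Bool
  | k => if Nat.sqrt k * Nat.sqrt k = k then c (Nat.sqrt k)
      else if F (List.ofFn fun i : Fin k => aseq F c i) < 1/2 then true else false

lemma aseq_sq (F : List Bool → ℝ) (c : ℕ → Bool) (m : ℕ) : aseq F c (m * m) = c m := by
  rw [aseq]
  simp [Nat.sqrt_eq]

lemma aseq_inj (F : List Bool → ℝ) : Function.Injective (aseq F) := by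
  intro c d h
  funext m
  have := congrFun h (m * m)
  rwa [aseq_sq, aseq_sq] at this

lemma fc_aseq (F : List Bool → ℝ) (c : ℕ → Bool) (k : ℕ) :
    fc F (aseq F c) k = F (List.ofFn fun i : Fin k => aseq F c i) := rfl

lemma aseq_nonsq (F : List Bool → ℝ) (c : ℕ → Bool) (k : ℕ)
    (h : ¬ (Nat.sqrt k * Nat.sqrt k = k)) :
    aseq F c k = if fc F (aseq F c) k < 1/2 then true else false := by
  rw [aseq, if_neg h, fc_aseq]

lemma disc_mem (F : List Bool → ℝ) (hF : ∀ w, F w ∈ Set.Icc (0 : ℝ) 1) (a : ℕ → Bool) (k : ℕ) :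
    disc F a k ∈ Set.Icc (-1 : ℝ) 1 := by
  have := hF (List.ofFn fun i : Fin k => a i)
  unfold disc fc
  rcases this with ⟨h0, h1⟩
  constructor <;> (by_cases h : a k <;> simp [h] <;> linarith)

lemma disc_lo (F : List Bool → ℝ) (c : ℕ → Bool) (k : ℕ)
    (h : ¬ (Nat.sqrt k * Nat.sqrt k = k)) (h2 : fc F (aseq F c) k < 1/2) :
    1/2 ≤ disc F (aseq F c) k := by
  have ha : aseq F c k = true := by rw [aseq_nonsq F c k h, if_pos h2]
  unfold disc
  rw [ha]
  simp
  linarith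

lemma disc_hi (F : List Bool → ℝ) (c : ℕ → Bool) (k : ℕ)
    (h : ¬ (Nat.sqrt k * Nat.sqrt k = k)) (h2 : 1/2 ≤ fc F (aseq F c) k) :
    disc F (aseq F c) k ≤ -(1/2) := by
  have ha : aseq F c k = false := by rw [aseq_nonsq F c k h, if_neg (not_lt.mpr h2)]
  unfold disc
  rw [ha]
  simp
  linarith

open Classical in
lemma sq_count (n : ℕ) :
    ((Finset.range n).filter (fun k => Nat.sqrt k * Nat.sqrt k = k)).card ≤ Nat.sqrt n + 1 := by
  classical
  have hsub : ((Finset.range n).filter (fun k => Nat.sqrt k * Nat.sqrt k = k)) ⊆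
      (Finset.range (Nat.sqrt n + 1)).image (fun m => m * m) := by
    intro k hk
    simp only [Finset.mem_filter, Finset.mem_range] at hk
    obtain ⟨hkn, hsq⟩ := hk
    simp only [Finset.mem_image, Finset.mem_range]
    refine ⟨Nat.sqrt k, ?_, hsq⟩
    have : Nat.sqrt k ≤ Nat.sqrt n := Nat.sqrt_le_sqrt (le_of_lt hkn)
    omega
  calc _ ≤ _ := Finset.card_le_card hsub
    _ ≤ _ := (Finset.card_image_le).trans (by simp)

open Classical in
lemma avg_ge (F : List Bool → ℝ) (hF : ∀ w, F w ∈ Set.Icc (0 : ℝ) 1) (c : ℕ → Bool) (n : ℕ)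
    (hA : 6 * (Nat.sqrt n + 1) ≤
      (((Finset.range n).filter
        (fun k => fc F (aseq F c) k < 1/2 ∧ ¬(Nat.sqrt k * Nat.sqrt k = k))).card)) :
    (1 : ℝ)/7 ≤ avgDisc F (aseq F c) (fun k => fc F (aseq F c) k < 1/2) n := by
  classical
  set a := aseq F c with ha
  set T := (Finset.range n).filter (fun k => fc F a k < 1/2) with hT
  set B := T.filter (fun k => Nat.sqrt k * Nat.sqrt k = k) with hB
  set A := T.filter (fun k => ¬ (Nat.sqrt k * Nat.sqrt k = k)) with hA'
  have hAeq : A = (Finset.range n).filter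
      (fun k => fc F a k < 1/2 ∧ ¬(Nat.sqrt k * Nat.sqrt k = k)) := by
    rw [hA', hT, Finset.filter_filter]
  have hsum : (∑ k ∈ B, disc F a k) + (∑ k ∈ A, disc F a k) = ∑ k ∈ T, disc F a k :=
    Finset.sum_filter_add_sum_filter_not T _ _
  have hcard : B.card + A.card = T.card :=
    Finset.card_filter_add_card_filter_not _
  have hAcard : 6 * (Nat.sqrt n + 1) ≤ A.card := by rw [hAeq]; exact hA
  have hBcard : B.card ≤ Nat.sqrt n + 1 := by
    refine le_trans (Finset.card_le_card ?_) (sq_count n)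
    intro k hk
    simp only [hB, hT, Finset.mem_filter, Finset.mem_range] at hk ⊢
    exact ⟨hk.1.1, hk.2⟩
  have hsumA : (A.card : ℝ) * (1/2) ≤ ∑ k ∈ A, disc F a k := by
    have h2 : ∀ k ∈ A, (1:ℝ)/2 ≤ disc F a k := by
      intro k hk
      simp only [hA', hT, Finset.mem_filter, Finset.mem_range] at hk
      exact disc_lo F c k hk.2 hk.1.2
    calc (A.card : ℝ) * (1/2) = ∑ _k ∈ A, (1:ℝ)/2 := by
          rw [Finset.sum_const, nsmul_eq_mul]
      _ ≤ _ := Finset.sum_le_sum h2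
  have hsumB : -(B.card : ℝ) ≤ ∑ k ∈ B, disc F a k := by
    have h2 : ∀ k ∈ B, (-1:ℝ) ≤ disc F a k := fun k _ => (disc_mem F hF a k).1
    calc -(B.card : ℝ) = ∑ _k ∈ B, (-1:ℝ) := by rw [Finset.sum_const, nsmul_eq_mul]; ring
      _ ≤ _ := Finset.sum_le_sum h2
  have hTpos : 0 < T.card := by omega
  unfold avgDisc
  rw [le_div_iff₀ (by exact_mod_cast hTpos)]
  have hc : (T.card : ℝ) = (B.card : ℝ) + (A.card : ℝ) := by exact_mod_cast hcard.symm
  have hAc : (6 : ℝ) * ((Nat.sqrt n : ℝ) + 1) ≤ (A.card : ℝ) := by exact_mod_cast hAcard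
  have hBc : (B.card : ℝ) ≤ (Nat.sqrt n : ℝ) + 1 := by exact_mod_cast hBcard
  have hBnn : (0:ℝ) ≤ (B.card : ℝ) := by positivity
  have hsum' : (∑ k ∈ T, disc F a k) = (∑ k ∈ B, disc F a k) + (∑ k ∈ A, disc F a k) := hsum.symm
  rw [hsum']
  linarith

open Classical in
lemma avg_le (F : List Bool → ℝ) (hF : ∀ w, F w ∈ Set.Icc (0 : ℝ) 1) (c : ℕ → Bool) (n : ℕ)
    (hA : 6 * (Nat.sqrt n + 1) ≤
      (((Finset.range n).filter
        (fun k => 1/2 ≤ fc F (aseq F c) k ∧ ¬(Nat.sqrt k * Nat.sqrt k = k))).card)) :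
    avgDisc F (aseq F c) (fun k => 1/2 ≤ fc F (aseq F c) k) n ≤ -(1 : ℝ)/7 := by
  classical
  set a := aseq F c with ha
  set T := (Finset.range n).filter (fun k => 1/2 ≤ fc F a k) with hT
  set B := T.filter (fun k => Nat.sqrt k * Nat.sqrt k = k) with hB
  set A := T.filter (fun k => ¬ (Nat.sqrt k * Nat.sqrt k = k)) with hA'
  have hAeq : A = (Finset.range n).filter
      (fun k => 1/2 ≤ fc F a k ∧ ¬(Nat.sqrt k * Nat.sqrt k = k)) := by
    rw [hA', hT, Finset.filter_filter]
  have hsum : (∑ k ∈ B, disc F a k) + (∑ k ∈ A, disc F a k) = ∑ k ∈ T, disc F a k :=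
    Finset.sum_filter_add_sum_filter_not T _ _
  have hcard : B.card + A.card = T.card :=
    Finset.card_filter_add_card_filter_not _
  have hAcard : 6 * (Nat.sqrt n + 1) ≤ A.card := by rw [hAeq]; exact hA
  have hBcard : B.card ≤ Nat.sqrt n + 1 := by
    refine le_trans (Finset.card_le_card ?_) (sq_count n)
    intro k hk
    simp only [hB, hT, Finset.mem_filter, Finset.mem_range] at hk ⊢
    exact ⟨hk.1.1, hk.2⟩
  have hsumA : (∑ k ∈ A, disc F a k) ≤ (A.card : ℝ) * (-(1/2)) := by
    have h2 : ∀ k ∈ A, disc F a k ≤ -(1:ℝ)/2 := by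
      intro k hk
      simp only [hA', hT, Finset.mem_filter, Finset.mem_range] at hk
      have := disc_hi F c k hk.2 hk.1.2
      linarith
    calc (∑ k ∈ A, disc F a k) ≤ ∑ _k ∈ A, (-(1:ℝ)/2) := Finset.sum_le_sum h2
      _ = (A.card : ℝ) * (-(1/2)) := by rw [Finset.sum_const, nsmul_eq_mul]; ring
  have hsumB : (∑ k ∈ B, disc F a k) ≤ (B.card : ℝ) := by
    have h2 : ∀ k ∈ B, disc F a k ≤ (1:ℝ) := fun k _ => (disc_mem F hF a k).2
    calc (∑ k ∈ B, disc F a k) ≤ ∑ _k ∈ B, (1:ℝ) := Finset.sum_le_sum h2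
      _ = (B.card : ℝ) := by rw [Finset.sum_const, nsmul_eq_mul]; ring
  have hTpos : 0 < T.card := by omega
  unfold avgDisc
  rw [div_le_iff₀ (by exact_mod_cast hTpos)]
  have hc : (T.card : ℝ) = (B.card : ℝ) + (A.card : ℝ) := by exact_mod_cast hcard.symm
  have hAc : (6 : ℝ) * ((Nat.sqrt n : ℝ) + 1) ≤ (A.card : ℝ) := by exact_mod_cast hAcard
  have hBc : (B.card : ℝ) ≤ (Nat.sqrt n : ℝ) + 1 := by exact_mod_cast hBcard
  have hBnn : (0:ℝ) ≤ (B.card : ℝ) := by positivity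
  have hsum' : (∑ k ∈ T, disc F a k) = (∑ k ∈ B, disc F a k) + (∑ k ∈ A, disc F a k) := hsum.symm
  rw [hsum']
  linarith

open Classical in
lemma finite_case {P : ℕ → Prop} (hfin : {k | P k}.Finite)
    (hf : ∃ᶠ n in atTop, 6 * (Nat.sqrt n + 1) ≤
      ((Finset.range n).filter (fun k => P k ∧ ¬(Nat.sqrt k * Nat.sqrt k = k))).card) :
    False := by
  classical
  set M := hfin.toFinset.card with hM
  obtain ⟨n, hcond, hge⟩ := (hf.and_eventually (eventually_ge_atTop ((M+1)*(M+1)))).exists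
  have hs : M + 1 ≤ Nat.sqrt n := Nat.le_sqrt.mpr hge
  have hsub : (Finset.range n).filter (fun k => P k ∧ ¬(Nat.sqrt k * Nat.sqrt k = k)) ⊆
      hfin.toFinset := by
    intro k hk
    simp only [Finset.mem_filter, Finset.mem_range] at hk
    exact (Set.Finite.mem_toFinset hfin).mpr hk.2.1
  have hle : ((Finset.range n).filter
      (fun k => P k ∧ ¬(Nat.sqrt k * Nat.sqrt k = k))).card ≤ M :=
    Finset.card_le_card hsub
  omega

open Classical in
lemma pigeon (F : List Bool → ℝ) (c : ℕ → Bool) (n : ℕ) (hn : 196 ≤ n) :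
    6 * (Nat.sqrt n + 1) ≤ ((Finset.range n).filter
        (fun k => 1/2 ≤ fc F (aseq F c) k ∧ ¬(Nat.sqrt k * Nat.sqrt k = k))).card ∨
    6 * (Nat.sqrt n + 1) ≤ ((Finset.range n).filter
        (fun k => fc F (aseq F c) k < 1/2 ∧ ¬(Nat.sqrt k * Nat.sqrt k = k))).card := by
  classical
  set a := aseq F c with ha
  have hsqc := sq_count n
  have htot : ((Finset.range n).filter (fun k => Nat.sqrt k * Nat.sqrt k = k)).card +
      ((Finset.range n).filter (fun k => ¬(Nat.sqrt k * Nat.sqrt k = k))).card = n := by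
    rw [Finset.card_filter_add_card_filter_not, Finset.card_range]
  set N := (Finset.range n).filter (fun k => ¬(Nat.sqrt k * Nat.sqrt k = k)) with hN
  have hsplit : (N.filter (fun k => 1/2 ≤ fc F a k)).card +
      (N.filter (fun k => ¬(1/2 ≤ fc F a k))).card = N.card :=
    Finset.card_filter_add_card_filter_not _
  have h1 : N.filter (fun k => 1/2 ≤ fc F a k) =
      (Finset.range n).filter (fun k => 1/2 ≤ fc F a k ∧ ¬(Nat.sqrt k * Nat.sqrt k = k)) := by
    rw [hN, Finset.filter_filter]
    exact Finset.filter_congr (by intro k _; simp [and_comm])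
  have h2 : N.filter (fun k => ¬(1/2 ≤ fc F a k)) =
      (Finset.range n).filter (fun k => fc F a k < 1/2 ∧ ¬(Nat.sqrt k * Nat.sqrt k = k)) := by
    rw [hN, Finset.filter_filter]
    exact Finset.filter_congr (by intro k _; simp [and_comm, not_le])
  rw [h1, h2] at hsplit
  have h13 : 13 * (Nat.sqrt n + 1) ≤ n := by
    have h14 : 14 ≤ Nat.sqrt n := Nat.le_sqrt.mpr (by omega)
    have hss : Nat.sqrt n * Nat.sqrt n ≤ n := by simpa [pow_two] using Nat.sqrt_le' n
    nlinarith
  omega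

lemma noncal (F : List Bool → ℝ) (hF : ∀ w, F w ∈ Set.Icc (0 : ℝ) 1) (c : ℕ → Bool) :
    ¬ HighLowCalibrated F (aseq F c) := by
  classical
  intro hcal
  set a := aseq F c with ha
  have hev : ∀ᶠ n in atTop,
      (6 * (Nat.sqrt n + 1) ≤ ((Finset.range n).filter
        (fun k => 1/2 ≤ fc F a k ∧ ¬(Nat.sqrt k * Nat.sqrt k = k))).card ∨
      6 * (Nat.sqrt n + 1) ≤ ((Finset.range n).filter
        (fun k => fc F a k < 1/2 ∧ ¬(Nat.sqrt k * Nat.sqrt k = k))).card) :=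
    eventually_atTop.2 ⟨196, pigeon F c⟩
  rcases Filter.frequently_or_distrib.mp hev.frequently with hf | hf
  · rcases hcal.1 with hfin | ht
    · exact finite_case hfin hf
    · have h0 : Tendsto (fun n => |avgDisc F a (fun k => 1/2 ≤ fc F a k) n|) atTop (𝓝 0) := by
        simpa using ht.abs
      have hev7 := h0.eventually_lt_const (show (0:ℝ) < 1/7 by norm_num)
      obtain ⟨n, hcond, hlt⟩ := (hf.and_eventually hev7).exists
      have hle := avg_le F hF c n hcond
      rw [abs_lt] at hlt
      rw [ha] at hlt  -- maybe unnecessary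
      linarith [hlt.1]
  · rcases hcal.2 with hfin | ht
    · exact finite_case hfin hf
    · have h0 : Tendsto (fun n => |avgDisc F a (fun k => fc F a k < 1/2) n|) atTop (𝓝 0) := by
        simpa using ht.abs
      have hev7 := h0.eventually_lt_const (show (0:ℝ) < 1/7 by norm_num)
      obtain ⟨n, hcond, hlt⟩ := (hf.and_eventually hev7).exists
      have hge := avg_ge F hF c n hcond
      rw [abs_lt] at hlt
      linarith [hlt.2]

theorem noncalibration_set_uncountable
    (F : List Bool → ℝ) (hF : ∀ w, F w ∈ Set.Icc (0 : ℝ) 1) :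
    ¬ {a : ℕ → Bool | ¬ HighLowCalibrated F a}.Countable := by
  intro hcnt
  have hsub : Set.range (aseq F) ⊆ {a : ℕ → Bool | ¬ HighLowCalibrated F a} := by
    rintro x ⟨c, rfl⟩
    exact noncal F hF c
  have h1 : (Set.range (aseq F)).Countable := hcnt.mono hsub
  have h2 : (Set.univ : Set (ℕ → Bool)).Countable := by
    have h3 := h1.preimage (aseq_inj F)
    have : (aseq F) ⁻¹' (Set.range (aseq F)) = Set.univ := by
      ext c; simp [Set.mem_preimage]
    rwa [this] at h3
  have h4 : Countable (ℕ → Bool) := Set.countable_univ_iff.mp h2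
  have h5 : (Cardinal.mk (ℕ → Bool)) ≤ Cardinal.aleph0 := Cardinal.mk_le_aleph0_iff.mpr h4
  have h6 : (2 : Cardinal) ^ (Cardinal.aleph0) = Cardinal.mk (ℕ → Bool) := by
    rw [Cardinal.mk_arrow]; simp [← one_add_one_eq_two]
  have h7 := Cardinal.cantor (Cardinal.aleph0)
  rw [h6] at h7
  exact absurd (h5.trans_lt h7) (lt_irrefl _)
end

section
/- In the Banach–Mazur game on Cantor space played with basic cylinder sets, Player 2 has a winning strategy for the target set A consisting of all sequences for which a fixed forecasting system F is high-low calibrated: the strategy of extending the current finite string bit by bit, always playing the bit 1 when the forecast is < 1/2 and 0 otherwise, until the mean discrepancy on one of the two selected subsequences has absolute value ≥ 1/4, defeats every play of Player 1. -/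
open Filter Topology

/-- Forecast along a finite string `v` on day `k`: `F` applied to the first `k` bits. -/
noncomputable def fcStr (F : List Bool → ℝ) (v : List Bool) (k : ℕ) : ℝ :=
  F (v.take k)

/-- Discrepancy along a finite string `v` on day `k`. -/
noncomputable def discStr (F : List Bool → ℝ) (v : List Bool) (k : ℕ) : ℝ :=
  (if v.getD k false then 1 else 0) - fcStr F v k

open Classical in
/-- Mean discrepancy along a finite string `v` over the days `k < |v|` satisfying `P`. -/
noncomputable def meanDiscStr (F : List Bool → ℝ) (v : List Bool) (P : ℕ → Prop) : ℝ :=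
  (∑ k ∈ (Finset.range v.length).filter P, discStr F v k) /
    (((Finset.range v.length).filter P).card : ℝ)

/-- The position after round `n` of the Banach–Mazur game on Cantor space in which
Player 2 uses strategy `σ` (responding to the current finite string by appending
`σ` of it) and Player 1's successive moves are the appended strings `f 0, f 1, …`
(Player 1 moves first). -/
def posSeq (σ : List Bool → List Bool) (f : ℕ → List Bool) : ℕ → List Bool
  | 0 => f 0
  | n + 1 => (posSeq σ f n ++ σ (posSeq σ f n)) ++ f (n + 1)

/-- `a` is an infinite binary sequence compatible with every position of the play,
i.e. `a` lies in the intersection of the chosen cylinder sets. -/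
def IsLimit (σ : List Bool → List Bool) (f : ℕ → List Bool) (a : ℕ → Bool) : Prop :=
  ∀ n k, k < (posSeq σ f n).length → (posSeq σ f n).getD k false = a k


/-!
If the current position has length `L`, Player 2 appends `10 L + 1` adversarial bits: on each of
these days the discrepancy is `≥ 1/2` when the forecast is `< 1/2` (the bit is `1`) and `≤ -1/2`
otherwise (the bit is `0`). One of the two groups receives more than `5 L` of the new days, and
these outweigh the at most `L` earlier days of the group, whose discrepancies are `≥ -1` (resp.
`≤ 1`); so after every move of Player 2 the mean discrepancy of that group is at least `1/4` in
absolute value. Along a play this happens at every round, hence for one fixed group infinitely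
often, and that group is infinite, so the limit sequence is not high-low calibrated.
-/

open Finset

noncomputable def advBits (F : List Bool → ℝ) (p : List Bool) : ℕ → List Bool
  | 0 => []
  | n + 1 => advBits F p n ++ [decide (F (p ++ advBits F p n) < 1/2)]

@[simp]
lemma length_advBits (F : List Bool → ℝ) (p : List Bool) (n : ℕ) :
    (advBits F p n).length = n := by
  induction n with
  | zero => rfl
  | succ n ih => simp [advBits, ih]

def IsAdversarialFrom (F : List Bool → ℝ) (v : List Bool) (L : ℕ) : Prop :=
  ∀ k, L ≤ k → k < v.length → (v.getD k false = true ↔ fcStr F v k < 1/2)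

lemma IsAdversarialFrom.append_decide {F : List Bool → ℝ} {v : List Bool} {L : ℕ}
    (hv : IsAdversarialFrom F v L) : IsAdversarialFrom F (v ++ [decide (F v < 1/2)]) L := by
  intro k hLk hk
  rw [List.length_append, List.length_singleton, Nat.lt_succ_iff] at hk
  rcases hk.lt_or_eq with hk | rfl
  · rw [List.getD_append _ _ _ _ hk, fcStr, List.take_append_of_le_length hk.le]
    exact hv k hLk hk
  · simp [fcStr]

lemma isAdversarialFrom_append_advBits (F : List Bool → ℝ) (p : List Bool) (n : ℕ) :
    IsAdversarialFrom F (p ++ advBits F p n) p.length := by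
  induction n with
  | zero => intro k hLk hk; simp at hk; omega
  | succ n ih => simpa [advBits] using ih.append_decide

lemma quarter_le_sum_div_card_s7 {ι : Type*} [DecidableEq ι] {s t : Finset ι} {d : ι → ℝ}
    (hts : t ⊆ s) (hcard : 5 * #(s \ t) < #t) (hd : ∀ i ∈ s \ t, -1 ≤ d i)
    (hdt : ∀ i ∈ t, 1/2 ≤ d i) : 1/4 ≤ (∑ i ∈ s, d i) / #s := by
  have hsd : -(#(s \ t) : ℝ) ≤ ∑ i ∈ s \ t, d i := by
    simpa using card_nsmul_le_sum _ _ _ hd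
  have ht : (#t : ℝ) * (1/2) ≤ ∑ i ∈ t, d i := by
    simpa [mul_comm] using card_nsmul_le_sum _ _ _ hdt
  have hcard' : (5 * #(s \ t) + 1 : ℝ) ≤ #t := by exact_mod_cast hcard
  have hs : (#s : ℝ) = #(s \ t) + #t := by exact_mod_cast (card_sdiff_add_card_eq_card hts).symm
  rw [le_div_iff₀ (by rw [hs]; linarith), ← sum_sdiff hts, hs]
  linarith

open Classical in
lemma quarter_le_sum_filter_range_div_card {P : ℕ → Prop} {d : ℕ → ℝ} {L n : ℕ}
    (hcard : 5 * L < #((Ico L n).filter P)) (hd : ∀ k < n, -1 ≤ d k)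
    (hdP : ∀ k ∈ Ico L n, P k → 1/2 ≤ d k) :
    1/4 ≤ (∑ k ∈ (range n).filter P, d k) / #((range n).filter P) := by
  have hsub : (Ico L n).filter P ⊆ (range n).filter P :=
    filter_subset_filter _ fun k hk => mem_range.2 (mem_Ico.1 hk).2
  have hold : (range n).filter P \ (Ico L n).filter P ⊆ range L := by
    intro k
    simp only [Finset.mem_sdiff, mem_filter, mem_Ico, mem_range]
    rintro ⟨⟨hkn, hP⟩, hnew⟩
    by_contra hkL
    exact hnew ⟨⟨by omega, hkn⟩, hP⟩
  refine quarter_le_sum_div_card_s7 hsub ?_ (fun k hk => ?_) (fun k hk => ?_)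
  · calc 5 * #((range n).filter P \ (Ico L n).filter P) ≤ 5 * L := by
          simpa using Nat.mul_le_mul_left 5 (card_le_card hold)
      _ < _ := hcard
  · exact hd k (mem_range.1 (mem_filter.1 (Finset.mem_sdiff.1 hk).1).1)
  · exact hdP k (mem_filter.1 hk).1 (mem_filter.1 hk).2

lemma discStr_mem_Icc {F : List Bool → ℝ} (hF : ∀ w, F w ∈ Set.Icc (0 : ℝ) 1)
    (v : List Bool) (k : ℕ) : discStr F v k ∈ Set.Icc (-1 : ℝ) 1 := by
  obtain ⟨h0, h1⟩ := hF (v.take k)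
  constructor <;> cases hbit : v.getD k false <;> simp only [discStr, fcStr, hbit] <;>
    norm_num <;> linarith

def DeviatesAfter (F : List Bool → ℝ) (v : List Bool) (L : ℕ) : Prop :=
  ((∃ k, L ≤ k ∧ k < v.length ∧ fcStr F v k < 1/2) ∧
      1/4 ≤ meanDiscStr F v (fun k => fcStr F v k < 1/2)) ∨
    ((∃ k, L ≤ k ∧ k < v.length ∧ 1/2 ≤ fcStr F v k) ∧
      meanDiscStr F v (fun k => 1/2 ≤ fcStr F v k) ≤ -(1/4))

open Classical in
lemma IsAdversarialFrom.deviatesAfter {F : List Bool → ℝ} {v : List Bool} {L : ℕ}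
    (hF : ∀ w, F w ∈ Set.Icc (0 : ℝ) 1) (hv : IsAdversarialFrom F v L)
    (hlen : 11 * L + 1 ≤ v.length) : DeviatesAfter F v L := by
  set low : ℕ → Prop := fun k => fcStr F v k < 1/2
  set high : ℕ → Prop := fun k => 1/2 ≤ fcStr F v k
  have hsplit : #((Ico L v.length).filter low) + #((Ico L v.length).filter high)
      = v.length - L := by
    rw [← Nat.card_Ico, ← card_filter_add_card_filter_not (s := Ico L v.length) low]
    simp only [low, high, not_lt]
  have witness {P : ℕ → Prop} (h : 5 * L < #((Ico L v.length).filter P)) :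
      ∃ k, L ≤ k ∧ k < v.length ∧ P k := by
    obtain ⟨k, hk⟩ := card_pos.1 (Nat.zero_lt_of_lt h)
    simp only [mem_filter, mem_Ico] at hk
    exact ⟨k, hk.1.1, hk.1.2, hk.2⟩
  rcases (by omega : 5 * L < #((Ico L v.length).filter low) ∨
      5 * L < #((Ico L v.length).filter high)) with hlow | hhigh
  · refine Or.inl ⟨witness hlow, quarter_le_sum_filter_range_div_card hlow
      (fun k _ => (discStr_mem_Icc hF v k).1) fun k hk hk' => ?_⟩
    rw [mem_Ico] at hk
    have hbit := (hv k hk.1 hk.2).2 hk'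
    simp only [discStr, hbit, if_true]
    linarith
  · refine Or.inr ⟨witness hhigh, ?_⟩
    have := quarter_le_sum_filter_range_div_card (d := fun k => -discStr F v k) hhigh
      (fun k _ => neg_le_neg (discStr_mem_Icc hF v k).2) fun k hk hk' => ?_
    · rw [sum_neg_distrib, neg_div] at this
      exact le_neg_of_le_neg this
    rw [mem_Ico] at hk
    have hbit : v.getD k false = false := by
      simpa [high] using mt (hv k hk.1 hk.2).1 (not_lt.2 hk')
    simp only [discStr, hbit, Bool.false_eq_true, if_false]
    linarith

lemma take_eq_ofFn {α : Type*} {v : List α} {d : α} {a : ℕ → α}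
    (hva : ∀ k < v.length, v.getD k d = a k) {k : ℕ} (hk : k ≤ v.length) :
    v.take k = List.ofFn (fun i : Fin k => a i) := by
  refine List.ext_getElem (by simp [hk]) fun i hi _ => ?_
  rw [List.length_take] at hi
  rw [List.getElem_take, List.getElem_ofFn, ← hva i (by omega),
    List.getD_eq_getElem _ _ (by omega)]

lemma fcStr_eq_fc (F : List Bool → ℝ) {v : List Bool} {a : ℕ → Bool}
    (hva : ∀ k < v.length, v.getD k false = a k) {k : ℕ} (hk : k ≤ v.length) :
    fcStr F v k = fc F a k := by
  rw [fcStr, fc, take_eq_ofFn hva hk]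

lemma discStr_eq_disc (F : List Bool → ℝ) {v : List Bool} {a : ℕ → Bool}
    (hva : ∀ k < v.length, v.getD k false = a k) {k : ℕ} (hk : k < v.length) :
    discStr F v k = disc F a k := by
  rw [discStr, disc, hva k hk, fcStr_eq_fc F hva hk.le]

open Classical in
lemma meanDiscStr_eq_avgDisc (F : List Bool → ℝ) {v : List Bool} {a : ℕ → Bool}
    (hva : ∀ k < v.length, v.getD k false = a k) (G : ℝ → Prop) :
    meanDiscStr F v (fun k => G (fcStr F v k)) = avgDisc F a (fun k => G (fc F a k)) v.length := by
  have hfilter : (range v.length).filter (fun k => G (fcStr F v k))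
      = (range v.length).filter (fun k => G (fc F a k)) :=
    filter_congr fun k hk => by rw [fcStr_eq_fc F hva (mem_range.1 hk).le]
  rw [meanDiscStr, avgDisc, hfilter]
  congr 1
  exact sum_congr rfl fun k hk => discStr_eq_disc F hva (mem_range.1 (mem_filter.1 hk).1)

def GroupDeviatesAfter (F : List Bool → ℝ) (a : ℕ → Bool) (G : ℝ → Prop) (r : ℕ) : Prop :=
  (∃ k ∈ {k | G (fc F a k)}, r ≤ k) ∧
    ∃ m ≥ r, 1/4 ≤ |avgDisc F a (fun k => G (fc F a k)) m|

lemma DeviatesAfter.groupDeviatesAfter {F : List Bool → ℝ} {v : List Bool} {L : ℕ}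
    {a : ℕ → Bool} (hv : DeviatesAfter F v L) (hva : ∀ k < v.length, v.getD k false = a k)
    {r : ℕ} (hr : r ≤ L) :
    GroupDeviatesAfter F a (· < 1/2) r ∨ GroupDeviatesAfter F a (1/2 ≤ ·) r := by
  rcases hv with ⟨⟨k, hLk, hkv, hk⟩, hmean⟩ | ⟨⟨k, hLk, hkv, hk⟩, hmean⟩
  · refine Or.inl ⟨⟨k, ?_, hr.trans hLk⟩, v.length, by omega, ?_⟩
    · show fc F a k < 1/2
      rwa [← fcStr_eq_fc F hva hkv.le]
    · exact (meanDiscStr_eq_avgDisc F hva (· < 1/2) ▸ hmean).trans (le_abs_self _)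
  · refine Or.inr ⟨⟨k, ?_, hr.trans hLk⟩, v.length, by omega, ?_⟩
    · show 1/2 ≤ fc F a k
      rwa [← fcStr_eq_fc F hva hkv.le]
    · rw [← neg_le_neg_iff, neg_neg] at hmean
      exact (meanDiscStr_eq_avgDisc F hva (1/2 ≤ ·) ▸ hmean).trans (neg_le_abs _)

lemma not_finite_or_tendsto_zero_of_frequently {S : Set ℕ} {u : ℕ → ℝ} {c : ℝ} (hc : 0 < c)
    (h : ∃ᶠ r in atTop, (∃ k ∈ S, r ≤ k) ∧ ∃ m ≥ r, c ≤ |u m|) :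
    ¬ (S.Finite ∨ Tendsto u atTop (𝓝 0)) := by
  rintro (hfin | hlim)
  · obtain ⟨b, hb⟩ := hfin.bddAbove
    obtain ⟨r, ⟨⟨k, hkS, hrk⟩, -⟩, hbr⟩ := (h.and_eventually (eventually_gt_atTop b)).exists
    exact absurd (hb hkS) (by omega)
  · have hsmall : ∀ᶠ m in atTop, |u m| < c := by
      simpa using (hlim.abs.eventually_lt_const (by simpa using hc))
    obtain ⟨M, hM⟩ := eventually_atTop.1 hsmall
    obtain ⟨r, ⟨-, m, hrm, hm⟩, hMr⟩ := (h.and_eventually (eventually_ge_atTop M)).exists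
    exact (hM m (hMr.trans hrm)).not_ge hm

lemma le_length_posSeq {σ : List Bool → List Bool} (hσ : ∀ p, σ p ≠ []) (f : ℕ → List Bool) :
    ∀ n, n ≤ (posSeq σ f n).length
  | 0 => Nat.zero_le _
  | n + 1 => by
    have := le_length_posSeq hσ f n
    have := List.length_pos_iff.2 (hσ (posSeq σ f n))
    simp only [posSeq, List.length_append]
    omega

lemma IsLimit.getD_append_eq {σ : List Bool → List Bool} {f : ℕ → List Bool} {a : ℕ → Bool}
    (ha : IsLimit σ f a) (n : ℕ) {k : ℕ} (hk : k < (posSeq σ f n ++ σ (posSeq σ f n)).length) :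
    (posSeq σ f n ++ σ (posSeq σ f n)).getD k false = a k := by
  rw [← ha (n + 1) k (by simp only [posSeq, List.length_append] at hk ⊢; omega), posSeq,
    List.getD_append _ _ _ _ hk]

theorem not_highLowCalibrated_of_isLimit {F : List Bool → ℝ} {σ : List Bool → List Bool}
    (hσ : ∀ p, σ p ≠ []) (hdev : ∀ p, DeviatesAfter F (p ++ σ p) p.length)
    {f : ℕ → List Bool} {a : ℕ → Bool} (ha : IsLimit σ f a) : ¬ HighLowCalibrated F a := by
  have hround (n : ℕ) :
      GroupDeviatesAfter F a (· < 1/2) n ∨ GroupDeviatesAfter F a (1/2 ≤ ·) n :=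
    (hdev _).groupDeviatesAfter (fun _ hk => ha.getD_append_eq n hk) (le_length_posSeq hσ f n)
  rintro ⟨hhigh, hlow⟩
  rcases frequently_or_distrib.1 (Frequently.of_forall (f := atTop) hround) with h | h
  · exact not_finite_or_tendsto_zero_of_frequently (by norm_num) h hlow
  · exact not_finite_or_tendsto_zero_of_frequently (by norm_num) h hhigh

noncomputable def advStrategy (F : List Bool → ℝ) (p : List Bool) : List Bool :=
  advBits F p (10 * p.length + 1)

open Classical in
theorem player_two_adversarial_strategy_wins
    (F : List Bool → ℝ) (hF : ∀ w, F w ∈ Set.Icc (0 : ℝ) 1) :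
    ∃ σ : List Bool → List Bool,
      (∀ p, σ p ≠ []) ∧
      (∀ p k, p.length ≤ k → k < (p ++ σ p).length →
        ((p ++ σ p).getD k false = true ↔ fcStr F (p ++ σ p) k < 1/2)) ∧
      (∀ p,
        (((Finset.range (p ++ σ p).length).filter
              (fun k => fcStr F (p ++ σ p) k < 1/2)).Nonempty ∧
            1/4 ≤ meanDiscStr F (p ++ σ p) (fun k => fcStr F (p ++ σ p) k < 1/2)) ∨
        (((Finset.range (p ++ σ p).length).filter
              (fun k => 1/2 ≤ fcStr F (p ++ σ p) k)).Nonempty ∧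
            meanDiscStr F (p ++ σ p) (fun k => 1/2 ≤ fcStr F (p ++ σ p) k) ≤ -(1/4))) ∧
      (∀ f a, IsLimit σ f a → a ∉ {b : ℕ → Bool | HighLowCalibrated F b}) := by
  have hσ (p : List Bool) : advStrategy F p ≠ [] := by
    simp [← List.length_pos_iff, advStrategy]
  have hadv (p : List Bool) : IsAdversarialFrom F (p ++ advStrategy F p) p.length :=
    isAdversarialFrom_append_advBits F p _
  have hdev (p : List Bool) : DeviatesAfter F (p ++ advStrategy F p) p.length :=
    (hadv p).deviatesAfter hF (by simp [advStrategy]; omega)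
  refine ⟨advStrategy F, hσ, hadv, fun p => ?_,
    fun f a ha => not_highLowCalibrated_of_isLimit hσ hdev ha⟩
  rcases hdev p with ⟨⟨k, -, hk, hlow⟩, hmean⟩ | ⟨⟨k, -, hk, hhigh⟩, hmean⟩
  · exact Or.inl ⟨⟨k, mem_filter.2 ⟨mem_range.2 hk, hlow⟩⟩, hmean⟩
  · exact Or.inr ⟨⟨k, mem_filter.2 ⟨mem_range.2 hk, hhigh⟩⟩, hmean⟩
end

section
/- A subset A of Cantor space is meagre if and only if Player 2 has a winning strategy in the Banach–Mazur game on Cantor space played with basic cylinder sets and target set A (Player 1 wins iff the infinite sequence produced lies in A). -/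
open Filter Topology

namespace BMaux

/-- `a` extends the finite string `v`. -/
def Ext (a : ℕ → Bool) (v : List Bool) : Prop :=
  ∀ k, k < v.length → v.getD k false = a k

lemma ext_append_left {a : ℕ → Bool} {v u : List Bool} (h : Ext a (v ++ u)) : Ext a v := by
  intro k hk
  have h2 := h k (by simp [List.length_append]; omega)
  rwa [List.getD_append _ _ _ _ hk] at h2

lemma ext_nil (a : ℕ → Bool) : Ext a [] := by intro k hk; simp at hk

/-- Cylinder set of a string. -/
def Cyl (v : List Bool) : Set (ℕ → Bool) := {a | Ext a v}

lemma setOf_forall_lt (n : ℕ) (p : ℕ → (ℕ → Bool) → Prop) :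
    {a : ℕ → Bool | ∀ k, k < n → p k a} = ⋂ k : Fin n, {a : ℕ → Bool | p k a} := by
  ext a
  simp only [Set.mem_iInter, Set.mem_setOf_eq]
  exact ⟨fun h k => h k k.2, fun h k hk => h ⟨k, hk⟩⟩

lemma isOpen_eval_eq (k : ℕ) (c : Bool) : IsOpen {a : ℕ → Bool | a k = c} := by
  have : {a : ℕ → Bool | a k = c} = (fun a : ℕ → Bool => a k) ⁻¹' ({c} : Set Bool) := by
    ext a; simp
  rw [this]
  exact (isOpen_discrete _).preimage (continuous_apply k)

lemma isClosed_eval_eq (k : ℕ) (c : Bool) : IsClosed {a : ℕ → Bool | a k = c} := by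
  have : {a : ℕ → Bool | a k = c} = (fun a : ℕ → Bool => a k) ⁻¹' ({c} : Set Bool) := by
    ext a; simp
  rw [this]
  exact (isClosed_discrete _).preimage (continuous_apply k)

lemma isOpen_agree (n : ℕ) (x : ℕ → Bool) :
    IsOpen {a : ℕ → Bool | ∀ k, k < n → a k = x k} := by
  rw [setOf_forall_lt n (fun k a => a k = x k)]
  exact isOpen_iInter_of_finite fun k => isOpen_eval_eq _ _

lemma cyl_eq (v : List Bool) :
    Cyl v = {a : ℕ → Bool | ∀ k, k < v.length → a k = v.getD k false} := by
  ext a; constructor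
  · intro h k hk; exact (h k hk).symm
  · intro h k hk; exact (h k hk).symm

lemma isOpen_cyl (v : List Bool) : IsOpen (Cyl v) := by
  rw [cyl_eq]
  have : {a : ℕ → Bool | ∀ k, k < v.length → a k = v.getD k false}
      = {a : ℕ → Bool | ∀ k, k < v.length → a k = (fun j => v.getD j false) k} := rfl
  rw [this]; exact isOpen_agree _ _

lemma isClosed_cyl (v : List Bool) : IsClosed (Cyl v) := by
  rw [cyl_eq, setOf_forall_lt v.length (fun k a => a k = v.getD k false)]
  exact isClosed_iInter fun k => isClosed_eval_eq _ _

lemma cyl_nonempty (v : List Bool) : (Cyl v).Nonempty :=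
  ⟨fun k => v.getD k false, fun k _ => rfl⟩

/-- Any point of an open set has a cylinder neighborhood inside it. -/
lemma exists_agree_subset {U : Set (ℕ → Bool)} (hU : IsOpen U) {x : ℕ → Bool} (hx : x ∈ U) :
    ∃ n, ∀ a : ℕ → Bool, (∀ k, k < n → a k = x k) → a ∈ U := by
  obtain ⟨I, u, hu, hsub⟩ := isOpen_pi_iff.1 hU x hx
  refine ⟨(I.sup id) + 1, fun a ha => hsub ?_⟩
  intro i hi
  have hiI : i ∈ I := hi
  have : i ≤ I.sup id := Finset.le_sup (f := id) hiI
  rw [ha i (by omega)]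
  exact (hu i hiI).2

lemma ofFn_fill_getD (x : ℕ → Bool) (v : List Bool) (hxv : Ext x v) (m : ℕ)
    (hm : v.length ≤ m) :
    ∀ k, k < m →
      (v ++ List.ofFn (fun i : Fin (m - v.length) => x (v.length + i))).getD k false = x k := by
  intro k hk
  rcases lt_or_ge k v.length with h | h
  · rw [List.getD_append _ _ _ _ h]
    exact hxv k h
  · rw [List.getD_append_right _ _ _ _ h]
    have hlt : k - v.length < (List.ofFn (fun i : Fin (m - v.length) => x (v.length + i))).length := by
      rw [List.length_ofFn]; omega
    rw [List.getD_eq_getElem _ _ hlt, List.getElem_ofFn]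
    congr 1
    simp only [Fin.val_mk]
    omega

lemma ofFn_fill_length (x : ℕ → Bool) (v : List Bool) (m : ℕ) (hm : v.length ≤ m) :
    (v ++ List.ofFn (fun i : Fin (m - v.length) => x (v.length + i))).length = m := by
  simp [List.length_append, List.length_ofFn]; omega

/-- Key avoidance: for closed `T` with empty interior, every string has a proper
extension whose cylinder misses `T`. -/
lemma exists_avoid {T : Set (ℕ → Bool)} (hcl : IsClosed T) (hnd : interior T = ∅)
    (v : List Bool) :
    ∃ w : List Bool, w ≠ [] ∧ ∀ a, Ext a (v ++ w) → a ∉ T := by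
  have hd : Dense Tᶜ := interior_eq_empty_iff_dense_compl.1 hnd
  obtain ⟨x, hxc, hxv⟩ := hd.exists_mem_open (isOpen_cyl v) (cyl_nonempty v)
  obtain ⟨n, hn⟩ := exists_agree_subset hcl.isOpen_compl hxc
  set m := max n (v.length + 1) with hm
  have hvm : v.length ≤ m := by omega
  refine ⟨List.ofFn (fun i : Fin (m - v.length) => x (v.length + i)), ?_, ?_⟩
  · intro h
    have := congrArg List.length h
    rw [List.length_ofFn] at this
    simp at this
    omega
  · intro a ha hT
    have hkey : ∀ k, k < n → a k = x k := by
      intro k hk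
      have hklt : k < (v ++ List.ofFn (fun i : Fin (m - v.length) => x (v.length + i))).length := by
        rw [ofFn_fill_length x v m hvm]; omega
      have h1 := ha k hklt
      have h2 := ofFn_fill_getD x v hxv m hvm k (by omega)
      rw [← h1, h2]
    exact hn a hkey hT

lemma interior_union_empty {s t : Set (ℕ → Bool)} (hs : IsClosed s)
    (hsi : interior s = ∅) (hti : interior t = ∅) : interior (s ∪ t) = ∅ := by
  have h1 : interior (s ∪ t) \ s ⊆ interior t := by
    apply interior_maximal
    · intro x hx
      rcases (interior_subset hx.1) with h | h
      · exact absurd h hx.2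
      · exact h
    · exact isOpen_interior.sdiff hs
  rw [hti] at h1
  have h2 : interior (s ∪ t) ⊆ s := by
    intro x hx
    by_contra hxs
    exact h1 ⟨hx, hxs⟩
  have h3 := interior_maximal h2 isOpen_interior
  rw [hsi] at h3
  rw [← Set.subset_empty_iff]
  intro x hx
  exact h3 (by simpa using hx)

/-- An increasing tower of closed nowhere dense sets. -/
def tower (g : ℕ → Set (ℕ → Bool)) : ℕ → Set (ℕ → Bool)
  | 0 => closure (g 0)
  | n + 1 => tower g n ∪ closure (g (n + 1))

lemma tower_closed (g : ℕ → Set (ℕ → Bool)) : ∀ n, IsClosed (tower g n)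
  | 0 => isClosed_closure
  | n + 1 => (tower_closed g n).union isClosed_closure

lemma tower_interior (g : ℕ → Set (ℕ → Bool)) (hg : ∀ n, IsNowhereDense (g n)) :
    ∀ n, interior (tower g n) = ∅
  | 0 => hg 0
  | n + 1 => interior_union_empty (tower_closed g n) (tower_interior g hg n) (hg (n + 1))

lemma tower_mono (g : ℕ → Set (ℕ → Bool)) {m n : ℕ} (h : m ≤ n) :
    tower g m ⊆ tower g n := by
  induction n with
  | zero => have h0 : m = 0 := by omega
            subst h0; exact le_refl _
  | succ n ih =>
    rcases Nat.lt_or_ge m (n + 1) with h' | h'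
    · exact (ih (by omega)).trans Set.subset_union_left
    · have h1 : m = n + 1 := by omega
      subst h1; exact le_refl _

lemma subset_tower (g : ℕ → Set (ℕ → Bool)) (n : ℕ) : g n ⊆ tower g n := by
  cases n with
  | zero => exact subset_closure
  | succ n => exact subset_closure.trans Set.subset_union_right

/-- The residual sets for Player 2's strategy `σ` rooted at `v`. -/
def M (σ : List Bool → List Bool) (v : List Bool) : Set (ℕ → Bool) :=
  {a | Ext a v ∧ ∀ u : List Bool, ¬ Ext a ((v ++ u) ++ σ (v ++ u))}

lemma isClosed_M (σ : List Bool → List Bool) (v : List Bool) : IsClosed (M σ v) := by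
  have hEq : M σ v = Cyl v ∩ ⋂ u : List Bool, (Cyl ((v ++ u) ++ σ (v ++ u)))ᶜ := by
    ext a
    simp only [M, Cyl, Set.mem_inter_iff, Set.mem_iInter, Set.mem_compl_iff,
      Set.mem_setOf_eq]
  rw [hEq]
  exact (isClosed_cyl v).inter (isClosed_iInter fun u => (isOpen_cyl _).isClosed_compl)

lemma interior_M (σ : List Bool → List Bool) (v : List Bool) : interior (M σ v) = ∅ := by
  rw [Set.eq_empty_iff_forall_notMem]
  intro x hx
  have hxM : x ∈ M σ v := interior_subset hx
  obtain ⟨n, hn⟩ := exists_agree_subset isOpen_interior hx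
  have hvm : v.length ≤ max n v.length := le_max_right _ _
  set m := max n v.length with hm
  set u := List.ofFn (fun i : Fin (m - v.length) => x (v.length + i)) with hu
  set L := (v ++ u) ++ σ (v ++ u) with hL
  have hbL : Ext (fun k => L.getD k false) L := fun k _ => rfl
  have hvu_len : (v ++ u).length = m := ofFn_fill_length x v m hvm
  have hbx : ∀ k, k < n → (fun k => L.getD k false) k = x k := by
    intro k hk
    have hkvu : k < (v ++ u).length := by rw [hvu_len]; omega
    have h1 : L.getD k false = (v ++ u).getD k false := List.getD_append _ _ _ _ hkvu
    simp only []
    rw [h1]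
    exact ofFn_fill_getD x v hxM.1 m hvm k (by omega)
  have hbM : (fun k => L.getD k false) ∈ M σ v := interior_subset (hn _ hbx)
  exact hbM.2 u hbL

lemma isNowhereDense_M (σ : List Bool → List Bool) (v : List Bool) :
    IsNowhereDense (M σ v) :=
  (isClosed_M σ v).isNowhereDense_iff.2 (interior_M σ v)

/-- The sequence of Player 2 positions in the play built along `a`. -/
def chain (σ : List Bool → List Bool) (a : ℕ → Bool)
    (step : ∀ v : List Bool, Ext a v → {u : List Bool // Ext a ((v ++ u) ++ σ (v ++ u))}) :
    ℕ → {q : List Bool // Ext a (q ++ σ q)}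
  | 0 => ⟨(step [] (ext_nil a)).1, (step [] (ext_nil a)).2⟩
  | n + 1 =>
    ⟨((chain σ a step n).1 ++ σ (chain σ a step n).1) ++
        (step ((chain σ a step n).1 ++ σ (chain σ a step n).1) (chain σ a step n).2).1,
     (step ((chain σ a step n).1 ++ σ (chain σ a step n).1) (chain σ a step n).2).2⟩

/-- Player 1's moves in the play built along `a`. -/
def moves (σ : List Bool → List Bool) (a : ℕ → Bool)
    (step : ∀ v : List Bool, Ext a v → {u : List Bool // Ext a ((v ++ u) ++ σ (v ++ u))}) :
    ℕ → List Bool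
  | 0 => (chain σ a step 0).1
  | n + 1 => (step ((chain σ a step n).1 ++ σ (chain σ a step n).1) (chain σ a step n).2).1

lemma posSeq_chain (σ : List Bool → List Bool) (a : ℕ → Bool)
    (step : ∀ v : List Bool, Ext a v → {u : List Bool // Ext a ((v ++ u) ++ σ (v ++ u))}) :
    ∀ n, posSeq σ (moves σ a step) n = (chain σ a step n).1
  | 0 => rfl
  | n + 1 => by
    show (posSeq σ (moves σ a step) n ++ σ (posSeq σ (moves σ a step) n)) ++
        moves σ a step (n + 1) = _
    rw [posSeq_chain σ a step n]
    rfl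

end BMaux

theorem banach_mazur_meagre_iff_player_two_wins (A : Set (ℕ → Bool)) :
    IsMeagre A ↔
      ∃ σ : List Bool → List Bool, ∀ f a, IsLimit σ f a → a ∉ A := by
  constructor
  · intro h
    obtain ⟨S, hS, hSc, hsub⟩ := isMeagre_iff_countable_union_isNowhereDense.1 h
    obtain ⟨g, hg⟩ := (hSc.insert ∅).exists_eq_range (Set.insert_nonempty _ _)
    have hgnd : ∀ n, IsNowhereDense (g n) := by
      intro n
      have hmem : g n ∈ insert ∅ S := by rw [hg]; exact Set.mem_range_self n
      rcases Set.mem_insert_iff.1 hmem with h0 | h'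
      · rw [h0]; exact isNowhereDense_empty
      · exact hS _ h'
    have H : ∀ v : List Bool,
        ∃ w, w ≠ [] ∧ ∀ a, BMaux.Ext a (v ++ w) → a ∉ BMaux.tower g v.length :=
      fun v => BMaux.exists_avoid (BMaux.tower_closed g _) (BMaux.tower_interior g hgnd _) v
    choose σ hσne hσav using H
    refine ⟨σ, fun f a hlim haA => ?_⟩
    have hlen : ∀ n, n ≤ (posSeq σ f n).length := by
      intro n
      induction n with
      | zero => exact Nat.zero_le _
      | succ n ih =>
        have h2 : 0 < (σ (posSeq σ f n)).length := List.length_pos_iff.2 (hσne _)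
        show n + 1 ≤ ((posSeq σ f n ++ σ (posSeq σ f n)) ++ f (n + 1)).length
        simp only [List.length_append]
        omega
    have havoid : ∀ n, a ∉ BMaux.tower g (posSeq σ f n).length := by
      intro n
      have hext : BMaux.Ext a ((posSeq σ f n) ++ σ (posSeq σ f n)) := by
        apply BMaux.ext_append_left (u := f (n + 1))
        exact hlim (n + 1)
      exact hσav _ a hext
    obtain ⟨s, hsS, has⟩ := hsub haA
    have hsr : s ∈ Set.range g := by rw [← hg]; exact Set.mem_insert_of_mem _ hsS
    obtain ⟨n, rfl⟩ := hsr
    exact havoid n (BMaux.tower_mono g (hlen n) (BMaux.subset_tower g n has))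
  · rintro ⟨σ, hw⟩
    have hcover : A ⊆ ⋃ v : List Bool, BMaux.M σ v := by
      intro a haA
      by_contra hna
      simp only [Set.mem_iUnion, not_exists] at hna
      have hstep : ∀ v : List Bool, BMaux.Ext a v →
          ∃ u, BMaux.Ext a ((v ++ u) ++ σ (v ++ u)) := by
        intro v hv
        rcases not_and_or.mp (hna v) with h | h
        · exact absurd hv h
        · push_neg at h
          exact h
      have hlim : IsLimit σ
          (BMaux.moves σ a fun v hv =>
            ⟨Classical.choose (hstep v hv), Classical.choose_spec (hstep v hv)⟩) a := by
        intro n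
        show BMaux.Ext a (posSeq σ _ n)
        rw [BMaux.posSeq_chain]
        exact BMaux.ext_append_left (u := σ _) (BMaux.chain σ a _ n).2
      exact absurd haA (hw _ a hlim)
    apply isMeagre_iff_countable_union_isNowhereDense.2
    refine ⟨Set.range (BMaux.M σ), ?_, Set.countable_range _, ?_⟩
    · rintro t ⟨v, rfl⟩
      exact BMaux.isNowhereDense_M σ v
    · rwa [Set.sUnion_range]
end

section
/- The set of infinite binary sequences for which some forecasting system from a fixed countable family is high-low calibrated is a meagre subset of Cantor space, hence has empty interior and is not all of Cantor space. -/
/-!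
A sequence calibrated by `F` lies, for some `N`, in the set of sequences whose two forecast
groups past day `N` are each empty or keep their mean discrepancy within `1/4`. This set is
closed, since each of its conditions reads finitely many bits, and it has empty interior: any
prefix extends adversarially (next bit `1` exactly when the forecast is below `1/2`), which
makes every later discrepancy at least `1/2` in size with the sign of its group, so the mean over
whichever group is infinite stays away from `0`. A countable union of such sets is meagre.
-/

open Filter Topology

open scoped Finset

theorem DependsOn.isLocallyConstant {ι β : Type*} {X : ι → Type*}
    [∀ i, TopologicalSpace (X i)] [∀ i, DiscreteTopology (X i)] {f : (Π i, X i) → β}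
    {s : Set ι} (hs : s.Finite) (hf : DependsOn f s) : IsLocallyConstant f := by
  rw [IsLocallyConstant.iff_exists_open]
  exact fun x => ⟨s.pi fun i => {x i}, isOpen_set_pi hs fun _ _ => isOpen_discrete _,
    by simp, fun y hy => hf fun i hi => hy i hi⟩

theorem exists_forall_lt_eq_imp_mem_of_mem_nhds {X : Type*} [TopologicalSpace X]
    {a : ℕ → X} {U : Set (ℕ → X)} (hU : U ∈ 𝓝 a) :
    ∃ n, ∀ b : ℕ → X, (∀ i < n, b i = a i) → b ∈ U := by
  rw [nhds_pi, Filter.mem_pi'] at hU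
  obtain ⟨I, t, ht, hsub⟩ := hU
  obtain ⟨n, hn⟩ := I.exists_nat_subset_range
  refine ⟨n, fun b hb => hsub fun i hi => ?_⟩
  rw [hb i (Finset.mem_range.1 (hn hi))]
  exact mem_of_mem_nhds (ht i)

theorem tendsto_card_filter_range_atTop {P : ℕ → Prop} [DecidablePred P]
    (hP : {k | P k}.Infinite) :
    Tendsto (fun m => #((Finset.range m).filter P)) atTop atTop := by
  simp_rw [← Nat.count_eq_card_filter_range]
  exact tendsto_atTop_atTop_of_monotone (Nat.count_monotone P)
    fun j => ⟨Nat.nth P j + 1, (Nat.count_nth_succ_of_infinite hP j).ge.trans' j.le_succ⟩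

theorem card_filter_range_mul_sub_le_sum {d : ℕ → ℝ} {P : ℕ → Prop} [DecidablePred P]
    {b : ℝ} {n : ℕ} (hd : ∀ k ≥ n, P k → b ≤ d k) (m : ℕ) :
    #((Finset.range m).filter P) * b - ∑ k ∈ Finset.range n, |d k - b| ≤
      ∑ k ∈ (Finset.range m).filter P, d k := by
  set T := (Finset.range m).filter P
  have hpointwise : ∀ k ∈ T, -(if k ∈ Finset.range n then |d k - b| else 0) ≤ d k - b := by
    intro k hk
    split_ifs with hkn
    · exact neg_abs_le _
    · simp only [Finset.mem_range, not_lt] at hkn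
      linarith [hd k hkn (Finset.mem_filter.1 hk).2]
  have hinitial : ∑ k ∈ T, (if k ∈ Finset.range n then |d k - b| else 0) ≤
      ∑ k ∈ Finset.range n, |d k - b| := by
    rw [Finset.sum_ite_mem]
    exact Finset.sum_le_sum_of_subset_of_nonneg Finset.inter_subset_right
      fun _ _ _ => abs_nonneg _
  have := Finset.sum_le_sum hpointwise
  rw [Finset.sum_neg_distrib, Finset.sum_sub_distrib, Finset.sum_const, nsmul_eq_mul] at this
  linarith

theorem eventually_lt_sum_filter_range_div_card {d : ℕ → ℝ} {P : ℕ → Prop}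
    [DecidablePred P] (hP : {k | P k}.Infinite) {b c : ℝ} (hcb : c < b) {n : ℕ}
    (hd : ∀ k ≥ n, P k → b ≤ d k) :
    ∀ᶠ m in atTop,
      c < (∑ k ∈ (Finset.range m).filter P, d k) / #((Finset.range m).filter P) := by
  -- The exceptional days `k < n` shift the sum by at most `G`, which the growing count dilutes.
  set G := ∑ k ∈ Finset.range n, |d k - b|
  have hlarge : ∀ᶠ m in atTop, G / (b - c) < #((Finset.range m).filter P) :=
    (tendsto_natCast_atTop_atTop.comp
      (tendsto_card_filter_range_atTop hP)).eventually_gt_atTop _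
  filter_upwards [hlarge] with m hm
  have hGpos : 0 ≤ G := Finset.sum_nonneg fun _ _ => abs_nonneg _
  have hcard : (0 : ℝ) < #((Finset.range m).filter P) :=
    (div_nonneg hGpos (by linarith)).trans_lt hm
  rw [div_lt_iff₀ (sub_pos.2 hcb)] at hm
  rw [lt_div_iff₀ hcard]
  linarith [card_filter_range_mul_sub_le_sum hd m]

theorem fc_dependsOn (F : List Bool → ℝ) (k : ℕ) :
    DependsOn (fun a => fc F a k) (Set.Iio k) := fun a b h => by
  simp only [fc]
  congr 2
  exact funext fun i => h i i.isLt

open Classical in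
theorem avgDisc_dependsOn (F : List Bool → ℝ) (P : ℝ → Prop) (m : ℕ) :
    DependsOn (fun a => avgDisc F a (fun k => P (fc F a k)) m) (Set.Iio m) := fun a b h => by
  have hfc : ∀ k < m, fc F a k = fc F b k := fun k hk =>
    fc_dependsOn F k fun i hi => h i ((Set.mem_Iio.1 hi).trans hk)
  have hdisc : ∀ k < m, disc F a k = disc F b k := fun k hk => by
    simp only [disc, hfc k hk, h k hk]
  simp only [avgDisc]
  rw [Finset.filter_congr fun k hk => by rw [hfc k (Finset.mem_range.1 hk)]]
  congr 1
  exact Finset.sum_congr rfl fun k hk =>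
    hdisc k (Finset.mem_range.1 (Finset.mem_filter.1 hk).1)

def nearCalibratedSet (F : List Bool → ℝ) (P : ℝ → Prop) (N : ℕ) : Set (ℕ → Bool) :=
  {a | (∀ k ≥ N, ¬ P (fc F a k)) ∨
    ∀ m ≥ N, |avgDisc F a (fun k => P (fc F a k)) m| ≤ 1/4}

def nearHighLowCalibratedSet (F : List Bool → ℝ) (N : ℕ) : Set (ℕ → Bool) :=
  nearCalibratedSet F (1/2 ≤ ·) N ∩ nearCalibratedSet F (· < 1/2) N

theorem isClosed_nearCalibratedSet (F : List Bool → ℝ) (P : ℝ → Prop) (N : ℕ) :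
    IsClosed (nearCalibratedSet F P N) := by
  have hpre : ∀ {f : (ℕ → Bool) → ℝ} {n : ℕ}, DependsOn f (Set.Iio n) →
      ∀ s, IsClosed (f ⁻¹' s) :=
    fun hf s => isOpen_compl_iff.1 (hf.isLocallyConstant (Set.finite_Iio _) sᶜ)
  simp only [nearCalibratedSet, Set.ofPred_or, Set.ofPred_forall]
  exact (isClosed_iInter fun k => isClosed_iInter fun _ =>
    hpre (fc_dependsOn F k) {x | ¬ P x}).union
    (isClosed_iInter fun m => isClosed_iInter fun _ =>
      hpre (avgDisc_dependsOn F P m) {x | |x| ≤ 1/4})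

theorem eventually_mem_nearCalibratedSet {F : List Bool → ℝ} {P : ℝ → Prop}
    {a : ℕ → Bool} (h : {k | P (fc F a k)}.Finite ∨
      Tendsto (avgDisc F a (fun k => P (fc F a k))) atTop (𝓝 0)) :
    ∀ᶠ N in atTop, a ∈ nearCalibratedSet F P N := by
  rcases h with hfin | htend
  · obtain ⟨B, hB⟩ := hfin.bddAbove
    filter_upwards [eventually_gt_atTop B] with N hN
    exact Or.inl fun k hk hPk => (hN.trans_le hk).not_ge (hB hPk)
  · have hsmall := htend.abs.eventually (ge_mem_nhds (by norm_num : |(0 : ℝ)| < 1/4))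
    obtain ⟨M, hM⟩ := eventually_atTop.1 hsmall
    filter_upwards [eventually_ge_atTop M] with N hN
    exact Or.inr fun m hm => hM m (hN.trans hm)

theorem HighLowCalibrated.exists_mem_nearHighLowCalibratedSet {F : List Bool → ℝ}
    {a : ℕ → Bool} (h : HighLowCalibrated F a) : ∃ N, a ∈ nearHighLowCalibratedSet F N :=
  ((eventually_mem_nearCalibratedSet h.1).and (eventually_mem_nearCalibratedSet h.2)).exists

theorem notMem_nearCalibratedSet {F : List Bool → ℝ} {P : ℝ → Prop} {a : ℕ → Bool}
    {N : ℕ} (hP : {k | P (fc F a k)}.Infinite)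
    (havg : ∀ᶠ m in atTop, 1/4 < |avgDisc F a (fun k => P (fc F a k)) m|) :
    a ∉ nearCalibratedSet F P N := by
  rintro (hnone | hsmall)
  · obtain ⟨k, hPk, hk⟩ := hP.exists_gt N
    exact hnone k hk.le hPk
  · obtain ⟨m, hm, hN⟩ := (havg.and (eventually_ge_atTop N)).exists
    exact (hsmall m hN).not_gt hm

noncomputable def advFrom (F : List Bool → ℝ) (a : ℕ → Bool) (n : ℕ) : ℕ → Bool
  | k => if k < n then a k else decide (F (List.ofFn fun i : Fin k => advFrom F a n i) < 1/2)

theorem advFrom_of_lt (F : List Bool → ℝ) (a : ℕ → Bool) {n k : ℕ} (hk : k < n) :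
    advFrom F a n k = a k := by
  rw [advFrom, if_pos hk]

theorem advFrom_of_le (F : List Bool → ℝ) (a : ℕ → Bool) {n k : ℕ} (hk : n ≤ k) :
    advFrom F a n k = decide (fc F (advFrom F a n) k < 1/2) := by
  rw [advFrom, if_neg hk.not_gt, fc]

theorem disc_advFrom_le_of_le_fc (F : List Bool → ℝ) (a : ℕ → Bool) {n k : ℕ}
    (hk : n ≤ k) (hfc : 1/2 ≤ fc F (advFrom F a n) k) : disc F (advFrom F a n) k ≤ -1/2 := by
  rw [disc, advFrom_of_le F a hk, decide_eq_false hfc.not_gt]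
  simp only [Bool.false_eq_true, if_false]
  linarith

theorem le_disc_advFrom_of_fc_lt (F : List Bool → ℝ) (a : ℕ → Bool) {n k : ℕ}
    (hk : n ≤ k) (hfc : fc F (advFrom F a n) k < 1/2) : 1/2 ≤ disc F (advFrom F a n) k := by
  rw [disc, advFrom_of_le F a hk, decide_eq_true hfc, if_pos rfl]
  linarith

theorem interior_nearHighLowCalibratedSet (F : List Bool → ℝ) (N : ℕ) :
    interior (nearHighLowCalibratedSet F N) = ∅ := by
  refine Set.eq_empty_iff_forall_notMem.2 fun a ha => ?_
  obtain ⟨n, hcyl⟩ := exists_forall_lt_eq_imp_mem_of_mem_nhds (mem_interior_iff_mem_nhds.1 ha)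
  set b := advFrom F a n
  have hb : b ∈ nearHighLowCalibratedSet F N := hcyl b fun i hi => advFrom_of_lt F a hi
  have hgroups : {k | 1/2 ≤ fc F b k} ∪ {k | fc F b k < 1/2} = Set.univ :=
    Set.eq_univ_of_forall fun k => le_or_gt (1/2) (fc F b k)
  rcases Set.infinite_union.1 (hgroups ▸ Set.infinite_univ) with hhigh | hlow
  · refine notMem_nearCalibratedSet hhigh ?_ hb.1
    have hneg := eventually_lt_sum_filter_range_div_card hhigh (by norm_num : (1/4 : ℝ) < 1/2)
      (d := fun k => -disc F b k) fun k hk hPk => by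
        linarith [disc_advFrom_le_of_le_fc F a hk hPk]
    filter_upwards [hneg] with m hm
    simp only [Finset.sum_neg_distrib, neg_div] at hm
    exact hm.trans_le (neg_le_abs _)
  · refine notMem_nearCalibratedSet hlow ?_ hb.2
    have hpos := eventually_lt_sum_filter_range_div_card hlow (by norm_num : (1/4 : ℝ) < 1/2)
      (d := disc F b) fun k hk hPk => le_disc_advFrom_of_fc_lt F a hk hPk
    filter_upwards [hpos] with m hm
    exact hm.trans_le (le_abs_self _)

theorem isNowhereDense_nearHighLowCalibratedSet (F : List Bool → ℝ) (N : ℕ) :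
    IsNowhereDense (nearHighLowCalibratedSet F N) :=
  ((isClosed_nearCalibratedSet F _ N).inter
    (isClosed_nearCalibratedSet F _ N)).isNowhereDense_iff.2 (interior_nearHighLowCalibratedSet F N)

theorem countable_family_calibration_set_meagre_general
    (F : ℕ → List Bool → ℝ) :
    IsMeagre {a : ℕ → Bool | ∃ i, HighLowCalibrated (F i) a} ∧
    interior {a : ℕ → Bool | ∃ i, HighLowCalibrated (F i) a} = ∅ ∧
    {a : ℕ → Bool | ∃ i, HighLowCalibrated (F i) a} ≠ Set.univ := by
  have hcover : {a : ℕ → Bool | ∃ i, HighLowCalibrated (F i) a} ⊆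
      ⋃ i, ⋃ N, nearHighLowCalibratedSet (F i) N := fun a ⟨i, hi⟩ =>
    Set.mem_iUnion₂.2 ⟨i, hi.exists_mem_nearHighLowCalibratedSet⟩
  have hmeagre : IsMeagre {a : ℕ → Bool | ∃ i, HighLowCalibrated (F i) a} :=
    (isMeagre_iUnion fun i => isMeagre_iUnion fun N =>
      (isNowhereDense_nearHighLowCalibratedSet (F i) N).isMeagre).mono hcover
  have hinterior : interior {a : ℕ → Bool | ∃ i, HighLowCalibrated (F i) a} = ∅ :=
    interior_eq_empty_iff_dense_compl.2 (dense_of_mem_residual hmeagre)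
  refine ⟨hmeagre, hinterior, fun huniv => ?_⟩
  rw [huniv, interior_univ] at hinterior
  exact Set.univ_nonempty.ne_empty hinterior

theorem countable_family_calibration_set_meagre
    (F : ℕ → List Bool → ℝ) (hF : ∀ i w, F i w ∈ Set.Icc (0 : ℝ) 1) :
    IsMeagre {a : ℕ → Bool | ∃ i, HighLowCalibrated (F i) a} ∧
    interior {a : ℕ → Bool | ∃ i, HighLowCalibrated (F i) a} = ∅ ∧
    {a : ℕ → Bool | ∃ i, HighLowCalibrated (F i) a} ≠ Set.univ :=
  countable_family_calibration_set_meagre_general F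
end

section
/- For any two reals p < q in [0,1], define a sequence x by declaring (by any rule that on day k assigns x_k depending only on x_1,...,x_{k-1}) x_k = 1 if F(x_1,...,x_{k-1}) ≤ p and x_k = 0 if F(x_1,...,x_{k-1}) ≥ q. If on a sequence a the forecaster F satisfies π_k ≤ p → a_k = 1 and π_k ≥ q → a_k = 0 for all k, and infinitely many days satisfy π_k ≤ p or infinitely many satisfy π_k ≥ q, then F fails to be calibrated for a with respect to the selection rule picking days with π_k ≤ p (respectively π_k ≥ q). -/
open Filter Topology

open Classical in
lemma aux_not_tendsto (f : ℕ → ℝ) (P : ℕ → Prop) (c : ℝ) (hc : 0 < c)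
    (h : ∀ k, P k → c ≤ f k) (hinf : {k | P k}.Infinite) :
    ¬ Filter.Tendsto (fun n => (∑ k ∈ (Finset.range n).filter P, f k) /
      (((Finset.range n).filter P).card : ℝ)) Filter.atTop (nhds 0) := by
  intro ht
  obtain ⟨k0, hk0⟩ := hinf.nonempty
  have key : ∀ n, k0 < n → c ≤ (∑ k ∈ (Finset.range n).filter P, f k) /
      (((Finset.range n).filter P).card : ℝ) := by
    intro n hn
    have hmem : k0 ∈ (Finset.range n).filter P := by
      exact Finset.mem_filter.mpr ⟨Finset.mem_range.mpr hn, hk0⟩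
    have hcard : 0 < (((Finset.range n).filter P).card : ℝ) := by
      have := Finset.card_pos.mpr ⟨k0, hmem⟩
      exact_mod_cast this
    rw [le_div_iff₀ hcard]
    calc c * (((Finset.range n).filter P).card : ℝ)
        = ∑ k ∈ (Finset.range n).filter P, c := by
          rw [Finset.sum_const, nsmul_eq_mul, mul_comm]
      _ ≤ ∑ k ∈ (Finset.range n).filter P, f k :=
          Finset.sum_le_sum (fun k hk => h k (Finset.mem_filter.mp hk).2)
  have := ht.eventually (eventually_lt_nhds hc)
  rw [Filter.eventually_atTop] at this
  obtain ⟨N, hN⟩ := this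
  have := hN (max N (k0+1)) (le_max_left _ _)
  have h2 := key (max N (k0+1)) (lt_of_lt_of_le (Nat.lt_succ_self k0) (le_max_right _ _))
  linarith

theorem general_adversarial_selection_rules
    (F : List Bool → ℝ) (hF : ∀ w, F w ∈ Set.Icc (0 : ℝ) 1)
    (p q : ℝ) (hp : p ∈ Set.Icc (0 : ℝ) 1) (hq : q ∈ Set.Icc (0 : ℝ) 1) (hpq : p < q)
    (a : ℕ → Bool)
    (ha : ∀ k, (fc F a k ≤ p → a k = true) ∧ (q ≤ fc F a k → a k = false)) :
    ({k | fc F a k ≤ p}.Infinite →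
      ¬ Tendsto (avgDisc F a (fun k => fc F a k ≤ p)) atTop (𝓝 0)) ∧
    ({k | q ≤ fc F a k}.Infinite →
      ¬ Tendsto (avgDisc F a (fun k => q ≤ fc F a k)) atTop (𝓝 0)) := by
  constructor
  · intro hinf ht
    have hc : (0:ℝ) < 1 - p := by linarith [hq.2]
    refine aux_not_tendsto (disc F a) (fun k => fc F a k ≤ p) (1-p) hc ?_ hinf ?_
    · intro k hk
      have := (ha k).1 hk
      simp only [disc, this, if_pos]
      linarith
    · exact ht
  · intro hinf ht
    have hc : (0:ℝ) < q := by linarith [hp.1]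
    have ht' : Filter.Tendsto (fun n => -(avgDisc F a (fun k => q ≤ fc F a k) n)) Filter.atTop (nhds 0) := by
      simpa using ht.neg
    refine aux_not_tendsto (fun k => -(disc F a k)) (fun k => q ≤ fc F a k) q hc ?_ hinf ?_
    · intro k hk
      have := (ha k).2 hk
      simp only [disc, this]
      simpa using hk
    · convert ht' using 2 with n
      simp [avgDisc, Finset.sum_neg_distrib, neg_div]
end
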